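/- arXiv:2604.08992 — 5 statements merged into one kernel-verified Lean document; each statement's English description precedes it below -/
import Mathlib

section
/- Let G be a connected graph embedded isometrically in a hypercube Q_k (a partial cube), with Θ-classes (edge cuts) F_1, …, F_k. If for each i, G − F_i has exactly two connected components with n_1^i and n_2^i vertices, then the Wiener index of G equals the sum over i of n_1^i · n_2^i. -/
/-- Cut method for partial cubes: if `G` embeds isometrically into a hypercube
(via a labeling `ℓ` so that graph distance equals Hamming distance), the
`Θ`-class `F i` consists of the edges whose endpoint labels differ in
coordinate `i`, and each `G - F i` has exactly two connected components of
sizes `n₁ i` and `n₂ i`, then `W(G) = ∑ i, n₁ i · n₂ i`. -/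
theorem wiener_cut_method {V : Type*} [Fintype V] [DecidableEq V] {k : ℕ}
    (G : SimpleGraph V) (hG : G.Connected)
    (ℓ : V → Fin k → Bool)
    (hiso : ∀ u v : V, G.dist u v = hammingDist (ℓ u) (ℓ v))
    (F : Fin k → Set (Sym2 V))
    (hF : ∀ i, F i = {e | ∃ u v : V, e = s(u, v) ∧ G.Adj u v ∧ ℓ u i ≠ ℓ v i})
    (n₁ n₂ : Fin k → ℕ)
    (hcomp : ∀ i, ∃ c₁ c₂ : (G.deleteEdges (F i)).ConnectedComponent,
      c₁ ≠ c₂ ∧ (∀ c, c = c₁ ∨ c = c₂) ∧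
      n₁ i = Nat.card c₁.supp ∧ n₂ i = Nat.card c₂.supp) :
    (∑ p : V × V, (G.dist p.1 p.2 : ℚ)) / 2 = ∑ i : Fin k, (n₁ i : ℚ) * (n₂ i : ℚ) := by
  classical
  -- Step 0: rewrite distances as sums of indicators
  have hdist : ∀ p : V × V, (G.dist p.1 p.2 : ℚ)
      = ∑ i : Fin k, (if ℓ p.1 i ≠ ℓ p.2 i then (1 : ℚ) else 0) := by
    intro p
    rw [hiso, hammingDist]
    rw [Finset.card_filter]
    push_cast
    rfl
  -- per-coordinate analysis
  have main : ∀ i : Fin k,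
      ∑ p : V × V, (if ℓ p.1 i ≠ ℓ p.2 i then (1 : ℚ) else 0)
        = 2 * (n₁ i : ℚ) * (n₂ i : ℚ) := by
    intro i
    obtain ⟨c₁, c₂, hne, hall, hn1, hn2⟩ := hcomp i
    -- constancy of coordinate i on components of the edge-deleted graph
    have constA : ∀ u v : V, (G.deleteEdges (F i)).Reachable u v → ℓ u i = ℓ v i := by
      intro u v huv
      obtain ⟨w⟩ := huv
      induction w with
      | nil => rfl
      | cons h p ih =>
        rename_i a b c
        rw [SimpleGraph.deleteEdges_adj] at h
        have hab : ℓ a i = ℓ b i := by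
          by_contra hne'
          exact h.2 (by rw [hF]; exact ⟨a, b, rfl, h.1, hne'⟩)
        rw [hab]; exact ih
    have constA' : ∀ u v : V,
        (G.deleteEdges (F i)).connectedComponentMk u
          = (G.deleteEdges (F i)).connectedComponentMk v → ℓ u i = ℓ v i := by
      intro u v h
      exact constA u v (SimpleGraph.ConnectedComponent.exact h)
    -- an adjacent pair across the two components
    have hrep : ∃ a b : V, G.Adj a b ∧
        (G.deleteEdges (F i)).connectedComponentMk a
          ≠ (G.deleteEdges (F i)).connectedComponentMk b := by
      obtain ⟨x, hx⟩ := c₁.exists_rep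
      obtain ⟨y, hy⟩ := c₂.exists_rep
      have hx' : (G.deleteEdges (F i)).connectedComponentMk x = c₁ := hx
      have hy' : (G.deleteEdges (F i)).connectedComponentMk y = c₂ := hy
      have hxy : (G.deleteEdges (F i)).connectedComponentMk x
          ≠ (G.deleteEdges (F i)).connectedComponentMk y := by
        rw [hx', hy']; exact hne
      obtain ⟨w⟩ := hG.preconnected x y
      clear hx hy hx' hy'
      induction w with
      | nil => exact absurd rfl hxy
      | cons h p ih =>
        rename_i a b c
        by_cases hab : (G.deleteEdges (F i)).connectedComponentMk a
            = (G.deleteEdges (F i)).connectedComponentMk b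
        · obtain ⟨a', b', h1, h2⟩ := ih (hab ▸ hxy)
          exact ⟨a', b', h1, h2⟩
        · exact ⟨a, b, h, hab⟩
    obtain ⟨a, b, hadj, hab⟩ := hrep
    have habℓ : ℓ a i ≠ ℓ b i := by
      intro heq
      apply hab
      apply SimpleGraph.ConnectedComponent.sound
      exact SimpleGraph.Adj.reachable (by
        rw [SimpleGraph.deleteEdges_adj]
        refine ⟨hadj, ?_⟩
        rw [hF]
        rintro ⟨u', v', he, -, hne'⟩
        rw [Sym2.eq_iff] at he
        rcases he with ⟨rfl, rfl⟩ | ⟨rfl, rfl⟩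
        · exact hne' heq
        · exact hne' heq.symm)
    -- the key equivalence
    have hkey : ∀ u v : V, (ℓ u i ≠ ℓ v i) ↔
        (G.deleteEdges (F i)).connectedComponentMk u
          ≠ (G.deleteEdges (F i)).connectedComponentMk v := by
      intro u v
      constructor
      · intro h hc; exact h (constA' u v hc)
      · intro h
        rcases hall ((G.deleteEdges (F i)).connectedComponentMk a) with ha1 | ha2
        · rcases hall ((G.deleteEdges (F i)).connectedComponentMk b) with hb1 | hb2
          · exact absurd (ha1.trans hb1.symm) hab
          · rcases hall ((G.deleteEdges (F i)).connectedComponentMk u) with hu | hu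
            · have hv : (G.deleteEdges (F i)).connectedComponentMk v = c₂ := by
                rcases hall ((G.deleteEdges (F i)).connectedComponentMk v) with h' | h'
                · exact absurd (hu.trans h'.symm) h
                · exact h'
              rw [constA' u a (hu.trans ha1.symm), constA' v b (hv.trans hb2.symm)]
              exact habℓ
            · have hv : (G.deleteEdges (F i)).connectedComponentMk v = c₁ := by
                rcases hall ((G.deleteEdges (F i)).connectedComponentMk v) with h' | h'
                · exact h'
                · exact absurd (hu.trans h'.symm) h
              rw [constA' u b (hu.trans hb2.symm), constA' v a (hv.trans ha1.symm)]
              exact habℓ.symm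
        · rcases hall ((G.deleteEdges (F i)).connectedComponentMk b) with hb1 | hb2
          · rcases hall ((G.deleteEdges (F i)).connectedComponentMk u) with hu | hu
            · have hv : (G.deleteEdges (F i)).connectedComponentMk v = c₂ := by
                rcases hall ((G.deleteEdges (F i)).connectedComponentMk v) with h' | h'
                · exact absurd (hu.trans h'.symm) h
                · exact h'
              rw [constA' u b (hu.trans hb1.symm), constA' v a (hv.trans ha2.symm)]
              exact habℓ.symm
            · have hv : (G.deleteEdges (F i)).connectedComponentMk v = c₁ := by
                rcases hall ((G.deleteEdges (F i)).connectedComponentMk v) with h' | h'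
                · exact h'
                · exact absurd (hu.trans h'.symm) h
              rw [constA' u a (hu.trans ha2.symm), constA' v b (hv.trans hb1.symm)]
              exact habℓ
          · exact absurd (ha2.trans hb2.symm) hab
    -- counting
    have hsum1 : ∀ c : (G.deleteEdges (F i)).ConnectedComponent,
        ∑ u : V, (if (G.deleteEdges (F i)).connectedComponentMk u = c then (1 : ℚ) else 0)
          = (Nat.card c.supp : ℚ) := by
      intro c
      rw [Finset.sum_boole]
      congr 1
      rw [Nat.card_eq_fintype_card, Fintype.card_subtype]
      congr 1
      ext u
      simp [SimpleGraph.ConnectedComponent.mem_supp_iff]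
    have hsplit : ∀ p : V × V, (if ℓ p.1 i ≠ ℓ p.2 i then (1 : ℚ) else 0)
        = (if (G.deleteEdges (F i)).connectedComponentMk p.1 = c₁ then (1:ℚ) else 0)
            * (if (G.deleteEdges (F i)).connectedComponentMk p.2 = c₂ then (1:ℚ) else 0)
        + (if (G.deleteEdges (F i)).connectedComponentMk p.1 = c₂ then (1:ℚ) else 0)
            * (if (G.deleteEdges (F i)).connectedComponentMk p.2 = c₁ then (1:ℚ) else 0) := by
      intro p
      have h := hkey p.1 p.2
      rcases hall ((G.deleteEdges (F i)).connectedComponentMk p.1) with h1 | h1 <;>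
        rcases hall ((G.deleteEdges (F i)).connectedComponentMk p.2) with h2 | h2 <;>
        rw [h1, h2] at h <;>
        simp only [ne_eq, not_true_eq_false, iff_false, not_not, not_false_eq_true,
          iff_true] at h <;>
        simp [h1, h2, h, hne, hne.symm, Ne]
    have hprod : ∀ f g : V → ℚ,
        ∑ p : V × V, f p.1 * g p.2 = (∑ u : V, f u) * (∑ v : V, g v) := by
      intro f g
      rw [Finset.sum_mul_sum]
      rw [Fintype.sum_prod_type]
    calc ∑ p : V × V, (if ℓ p.1 i ≠ ℓ p.2 i then (1 : ℚ) else 0)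
        = ∑ p : V × V,
            ((if (G.deleteEdges (F i)).connectedComponentMk p.1 = c₁ then (1:ℚ) else 0)
              * (if (G.deleteEdges (F i)).connectedComponentMk p.2 = c₂ then (1:ℚ) else 0)
            + (if (G.deleteEdges (F i)).connectedComponentMk p.1 = c₂ then (1:ℚ) else 0)
              * (if (G.deleteEdges (F i)).connectedComponentMk p.2 = c₁ then (1:ℚ) else 0)) :=
          Finset.sum_congr rfl (fun p _ => hsplit p)
      _ = (∑ u : V, (if (G.deleteEdges (F i)).connectedComponentMk u = c₁ then (1:ℚ) else 0))
            * (∑ v : V, (if (G.deleteEdges (F i)).connectedComponentMk v = c₂ then (1:ℚ) else 0))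
          + (∑ u : V, (if (G.deleteEdges (F i)).connectedComponentMk u = c₂ then (1:ℚ) else 0))
            * (∑ v : V, (if (G.deleteEdges (F i)).connectedComponentMk v = c₁ then (1:ℚ) else 0)) := by
          rw [Finset.sum_add_distrib,
            hprod (fun u => if (G.deleteEdges (F i)).connectedComponentMk u = c₁ then (1:ℚ) else 0)
              (fun v => if (G.deleteEdges (F i)).connectedComponentMk v = c₂ then (1:ℚ) else 0),
            hprod (fun u => if (G.deleteEdges (F i)).connectedComponentMk u = c₂ then (1:ℚ) else 0)
              (fun v => if (G.deleteEdges (F i)).connectedComponentMk v = c₁ then (1:ℚ) else 0)]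
      _ = 2 * (n₁ i : ℚ) * (n₂ i : ℚ) := by
          rw [hsum1 c₁, hsum1 c₂, hn1, hn2]; push_cast; ring
  simp_rw [hdist]
  rw [Finset.sum_comm]
  simp_rw [main]
  rw [eq_comm, eq_div_iff (by norm_num : (2:ℚ) ≠ 0), Finset.sum_mul]
  congr 1
  ext i
  ring
end

section
/- For integers p ≥ 2, the Wiener index of the hexagonal square-cell configuration H(p) equals (158p⁵ − 35p³ − 3p)/15. -/
/-- The hexagonal square-cell configuration `H(p)` as a region of the integer
square lattice (equivalently `BT(3p−2, p, p)`): rows `y = 0, …, 2p−1`, where for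
`y ≤ p−1` row `y` is `[-y, p+y]` and for `y ≥ p` row `y` is
`[-(p-1)+(y-p), 2p-1-(y-p)]`. -/
noncomputable def hexRegion (p : ℤ) : Finset (ℤ × ℤ) :=
  (Finset.Icc (-(2 * p)) (2 * p) ×ˢ Finset.Icc (-(2 * p)) (2 * p)).filter fun z =>
    (0 ≤ z.2 ∧ z.2 ≤ p - 1 ∧ -z.2 ≤ z.1 ∧ z.1 ≤ p + z.2) ∨
    (p ≤ z.2 ∧ z.2 ≤ 2 * p - 1 ∧ -(p - 1) + (z.2 - p) ≤ z.1 ∧ z.1 ≤ 2 * p - 1 - (z.2 - p))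

open Finset

def rlo (p y : ℤ) : ℤ := if y ≤ p - 1 then -y else y - 2*p + 1
def rhi (p y : ℤ) : ℤ := if y ≤ p - 1 then p + y else 3*p - 1 - y
def clo (p x : ℤ) : ℤ := if x ≤ 0 then -x else if x ≤ p then 0 else x - p
def chi (p x : ℤ) : ℤ := if x ≤ 0 then 2*p - 1 + x else if x ≤ p then 2*p - 1 else 3*p - 1 - x
noncomputable def wy (p y : ℤ) : ℚ := ((rhi p y - rlo p y + 1 : ℤ) : ℚ)
noncomputable def wx (p x : ℤ) : ℚ := ((chi p x - clo p x + 1 : ℤ) : ℚ)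

lemma wy_low (p t : ℤ) (hp : 2 ≤ p) (h : t ≤ p - 1) : wy p t = (p:ℚ) + 1 + 2*(t:ℚ) := by
  have hz : rhi p t - rlo p t + 1 = p + 1 + 2*t := by
    simp only [rhi, rlo]; split_ifs <;> omega
  simp only [wy, hz]; push_cast; ring

lemma wy_high (p t : ℤ) (hp : 2 ≤ p) (h : p ≤ t) : wy p t = 5*(p:ℚ) - 1 - 2*(t:ℚ) := by
  have hz : rhi p t - rlo p t + 1 = 5*p - 1 - 2*t := by
    simp only [rhi, rlo]; split_ifs <;> omega
  simp only [wy, hz]; push_cast; ring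

lemma wx1 (p t : ℤ) (hp : 2 ≤ p) (h : t ≤ 0) : wx p t = 2*(p:ℚ) + 2*(t:ℚ) := by
  have hz : chi p t - clo p t + 1 = 2*p + 2*t := by
    simp only [chi, clo]; split_ifs <;> omega
  simp only [wx, hz]; push_cast; ring

lemma wx2 (p t : ℤ) (hp : 2 ≤ p) (h0 : 1 ≤ t) (h1 : t ≤ p) : wx p t = 2*(p:ℚ) := by
  have hz : chi p t - clo p t + 1 = 2*p := by
    simp only [chi, clo]; split_ifs <;> omega
  simp only [wx, hz]; push_cast; ring

lemma wx3 (p t : ℤ) (hp : 2 ≤ p) (h : p + 1 ≤ t) : wx p t = 4*(p:ℚ) - 2*(t:ℚ) := by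
  have hz : chi p t - clo p t + 1 = 4*p - 2*t := by
    simp only [chi, clo]; split_ifs <;> omega
  simp only [wx, hz]; push_cast; ring

lemma sum_Icc_split (f : ℤ → ℚ) (a b c : ℤ) (h1 : a ≤ b + 1) (h2 : b ≤ c) :
    ∑ t ∈ Icc a c, f t = (∑ t ∈ Icc a b, f t) + ∑ t ∈ Icc (b+1) c, f t := by
  rw [← Finset.sum_union (by
    rw [Finset.disjoint_left]; intro z hz hz'
    simp only [Finset.mem_Icc] at hz hz'; omega)]
  congr 1
  ext z; simp only [Finset.mem_Icc, Finset.mem_union]; omega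

def Phi (c0 c1 c2 c3 c4 m : ℚ) : ℚ :=
  c0*(m+1) + c1*(m*(m+1)/2) + c2*(m*(m+1)*(2*m+1)/6)
    + c3*(m*(m+1)/2)^2 + c4*(m*(m+1)*(2*m+1)*(3*m^2+3*m-1)/30)

lemma sumPoly (c0 c1 c2 c3 c4 : ℚ) (a b : ℤ) (hb : a - 1 ≤ b) :
    ∑ t ∈ Icc a b, (c0 + c1 * (t:ℚ) + c2 * (t:ℚ)^2 + c3 * (t:ℚ)^3 + c4 * (t:ℚ)^4)
      = Phi c0 c1 c2 c3 c4 (b:ℚ) - Phi c0 c1 c2 c3 c4 ((a:ℚ)-1) := by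
  revert hb
  refine Int.le_induction (m := a - 1) (motive := fun n _ => ∑ t ∈ Icc a n, (c0 + c1 * (t:ℚ) + c2 * (t:ℚ)^2 + c3 * (t:ℚ)^3 + c4 * (t:ℚ)^4)
      = Phi c0 c1 c2 c3 c4 (n:ℚ) - Phi c0 c1 c2 c3 c4 ((a:ℚ)-1)) ?_ ?_ b
  · beta_reduce
    rw [Finset.Icc_eq_empty (by omega), Finset.sum_empty]
    simp only [Phi]; push_cast; ring
  · intro n _ ih
    beta_reduce
    have hins : Icc a (n+1) = insert (n+1) (Icc a n) := by
      ext t; simp only [Finset.mem_Icc, Finset.mem_insert]; omega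
    rw [hins, Finset.sum_insert (by simp only [Finset.mem_Icc]; omega), ih]
    simp only [Phi]; push_cast; ring

lemma innerY1 (p y : ℤ) (hp : 2 ≤ p) (h0 : 0 ≤ y) (h1 : y ≤ p - 1) :
    ∑ t ∈ Icc (0) (2*p - 1), wy p t * |(y:ℚ) - (t:ℚ)| = ((1:ℚ)/3) * (y:ℚ) + (1:ℚ) * (y:ℚ)^2 + ((2:ℚ)/3) * (y:ℚ)^3 + (1:ℚ) * (p:ℚ) * (y:ℚ) + (1:ℚ) * (p:ℚ) * (y:ℚ)^2 + (-2:ℚ) * (p:ℚ)^2 + (-4:ℚ) * (p:ℚ)^2 * (y:ℚ) + (4:ℚ) * (p:ℚ)^3 := by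
  rw [sum_Icc_split _ (0) (y) (2*p - 1) (by omega) (by omega)]
  rw [sum_Icc_split _ (y+1) (p-1) (2*p - 1) (by omega) (by omega)]
  have e0 : ∑ t ∈ Icc (0) (y), wy p t * |(y:ℚ) - (t:ℚ)| =
      ∑ t ∈ Icc (0) (y), (((1:ℚ) * (y:ℚ) + (1:ℚ) * (p:ℚ) * (y:ℚ)) + ((-1:ℚ) + (2:ℚ) * (y:ℚ) + (-1:ℚ) * (p:ℚ)) * (t:ℚ) + ((-2:ℚ)) * (t:ℚ)^2 + ((0:ℚ)) * (t:ℚ)^3 + ((0:ℚ)) * (t:ℚ)^4) := by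
    refine Finset.sum_congr rfl fun t ht => ?_
    simp only [Finset.mem_Icc] at ht
    rw [wy_low p t hp (by omega), abs_of_nonneg (sub_nonneg.mpr (by exact_mod_cast (show (t:ℤ) ≤ y by omega) : ((t:ℚ) ≤ (y:ℚ))))]
    push_cast; ring
  rw [e0, sumPoly _ _ _ _ _ (0) (y) (by omega)]
  have e1 : ∑ t ∈ Icc (y+1) (p-1), wy p t * |(y:ℚ) - (t:ℚ)| =
      ∑ t ∈ Icc (y+1) (p-1), (((-1:ℚ) * (y:ℚ) + (-1:ℚ) * (p:ℚ) * (y:ℚ)) + ((1:ℚ) + (-2:ℚ) * (y:ℚ) + (1:ℚ) * (p:ℚ)) * (t:ℚ) + ((2:ℚ)) * (t:ℚ)^2 + ((0:ℚ)) * (t:ℚ)^3 + ((0:ℚ)) * (t:ℚ)^4) := by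
    refine Finset.sum_congr rfl fun t ht => ?_
    simp only [Finset.mem_Icc] at ht
    rw [wy_low p t hp (by omega), abs_of_nonpos (sub_nonpos.mpr (by exact_mod_cast (show (y:ℤ) ≤ t by omega) : ((y:ℚ) ≤ (t:ℚ))))]
    push_cast; ring
  rw [e1, sumPoly _ _ _ _ _ (y+1) (p-1) (by omega)]
  have e2 : ∑ t ∈ Icc (p-1+1) (2*p - 1), wy p t * |(y:ℚ) - (t:ℚ)| =
      ∑ t ∈ Icc (p-1+1) (2*p - 1), (((1:ℚ) * (y:ℚ) + (-5:ℚ) * (p:ℚ) * (y:ℚ)) + ((-1:ℚ) + (2:ℚ) * (y:ℚ) + (5:ℚ) * (p:ℚ)) * (t:ℚ) + ((-2:ℚ)) * (t:ℚ)^2 + ((0:ℚ)) * (t:ℚ)^3 + ((0:ℚ)) * (t:ℚ)^4) := by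
    refine Finset.sum_congr rfl fun t ht => ?_
    simp only [Finset.mem_Icc] at ht
    rw [wy_high p t hp (by omega), abs_of_nonpos (sub_nonpos.mpr (by exact_mod_cast (show (y:ℤ) ≤ t by omega) : ((y:ℚ) ≤ (t:ℚ))))]
    push_cast; ring
  rw [e2, sumPoly _ _ _ _ _ (p-1+1) (2*p - 1) (by omega)]
  simp only [Phi]; push_cast; ring

lemma innerY2 (p y : ℤ) (hp : 2 ≤ p) (h0 : p ≤ y) (h1 : y ≤ 2*p - 1) :
    ∑ t ∈ Icc (0) (2*p - 1), wy p t * |(y:ℚ) - (t:ℚ)| = ((-1:ℚ)/3) * (y:ℚ) + (-1:ℚ) * (y:ℚ)^2 + ((-2:ℚ)/3) * (y:ℚ)^3 + ((2:ℚ)/3) * (p:ℚ) + (5:ℚ) * (p:ℚ) * (y:ℚ) + (5:ℚ) * (p:ℚ) * (y:ℚ)^2 + (-4:ℚ) * (p:ℚ)^2 + (-8:ℚ) * (p:ℚ)^2 * (y:ℚ) + ((16:ℚ)/3) * (p:ℚ)^3 := by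
  rw [sum_Icc_split _ (0) (p-1) (2*p - 1) (by omega) (by omega)]
  rw [sum_Icc_split _ (p-1+1) (y) (2*p - 1) (by omega) (by omega)]
  have e0 : ∑ t ∈ Icc (0) (p-1), wy p t * |(y:ℚ) - (t:ℚ)| =
      ∑ t ∈ Icc (0) (p-1), (((1:ℚ) * (y:ℚ) + (1:ℚ) * (p:ℚ) * (y:ℚ)) + ((-1:ℚ) + (2:ℚ) * (y:ℚ) + (-1:ℚ) * (p:ℚ)) * (t:ℚ) + ((-2:ℚ)) * (t:ℚ)^2 + ((0:ℚ)) * (t:ℚ)^3 + ((0:ℚ)) * (t:ℚ)^4) := by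
    refine Finset.sum_congr rfl fun t ht => ?_
    simp only [Finset.mem_Icc] at ht
    rw [wy_low p t hp (by omega), abs_of_nonneg (sub_nonneg.mpr (by exact_mod_cast (show (t:ℤ) ≤ y by omega) : ((t:ℚ) ≤ (y:ℚ))))]
    push_cast; ring
  rw [e0, sumPoly _ _ _ _ _ (0) (p-1) (by omega)]
  have e1 : ∑ t ∈ Icc (p-1+1) (y), wy p t * |(y:ℚ) - (t:ℚ)| =
      ∑ t ∈ Icc (p-1+1) (y), (((-1:ℚ) * (y:ℚ) + (5:ℚ) * (p:ℚ) * (y:ℚ)) + ((1:ℚ) + (-2:ℚ) * (y:ℚ) + (-5:ℚ) * (p:ℚ)) * (t:ℚ) + ((2:ℚ)) * (t:ℚ)^2 + ((0:ℚ)) * (t:ℚ)^3 + ((0:ℚ)) * (t:ℚ)^4) := by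
    refine Finset.sum_congr rfl fun t ht => ?_
    simp only [Finset.mem_Icc] at ht
    rw [wy_high p t hp (by omega), abs_of_nonneg (sub_nonneg.mpr (by exact_mod_cast (show (t:ℤ) ≤ y by omega) : ((t:ℚ) ≤ (y:ℚ))))]
    push_cast; ring
  rw [e1, sumPoly _ _ _ _ _ (p-1+1) (y) (by omega)]
  have e2 : ∑ t ∈ Icc (y+1) (2*p - 1), wy p t * |(y:ℚ) - (t:ℚ)| =
      ∑ t ∈ Icc (y+1) (2*p - 1), (((1:ℚ) * (y:ℚ) + (-5:ℚ) * (p:ℚ) * (y:ℚ)) + ((-1:ℚ) + (2:ℚ) * (y:ℚ) + (5:ℚ) * (p:ℚ)) * (t:ℚ) + ((-2:ℚ)) * (t:ℚ)^2 + ((0:ℚ)) * (t:ℚ)^3 + ((0:ℚ)) * (t:ℚ)^4) := by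
    refine Finset.sum_congr rfl fun t ht => ?_
    simp only [Finset.mem_Icc] at ht
    rw [wy_high p t hp (by omega), abs_of_nonpos (sub_nonpos.mpr (by exact_mod_cast (show (y:ℤ) ≤ t by omega) : ((y:ℚ) ≤ (t:ℚ))))]
    push_cast; ring
  rw [e2, sumPoly _ _ _ _ _ (y+1) (2*p - 1) (by omega)]
  simp only [Phi]; push_cast; ring

lemma innerX1 (p x : ℤ) (hp : 2 ≤ p) (h0 : 1 - p ≤ x) (h1 : x ≤ 0) :
    ∑ t ∈ Icc (1-p) (2*p - 1), wx p t * |(x:ℚ) - (t:ℚ)| = ((-2:ℚ)/3) * (x:ℚ) + ((2:ℚ)/3) * (x:ℚ)^3 + ((-2:ℚ)/3) * (p:ℚ) + (2:ℚ) * (p:ℚ) * (x:ℚ)^2 + (-2:ℚ) * (p:ℚ)^2 * (x:ℚ) + ((8:ℚ)/3) * (p:ℚ)^3 := by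
  rw [sum_Icc_split _ (1-p) (x) (2*p - 1) (by omega) (by omega)]
  rw [sum_Icc_split _ (x+1) (0) (2*p - 1) (by omega) (by omega)]
  rw [sum_Icc_split _ (0+1) (p) (2*p - 1) (by omega) (by omega)]
  have e0 : ∑ t ∈ Icc (1-p) (x), wx p t * |(x:ℚ) - (t:ℚ)| =
      ∑ t ∈ Icc (1-p) (x), (((2:ℚ) * (p:ℚ) * (x:ℚ)) + ((2:ℚ) * (x:ℚ) + (-2:ℚ) * (p:ℚ)) * (t:ℚ) + ((-2:ℚ)) * (t:ℚ)^2 + ((0:ℚ)) * (t:ℚ)^3 + ((0:ℚ)) * (t:ℚ)^4) := by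
    refine Finset.sum_congr rfl fun t ht => ?_
    simp only [Finset.mem_Icc] at ht
    rw [wx1 p t hp (by omega), abs_of_nonneg (sub_nonneg.mpr (by exact_mod_cast (show (t:ℤ) ≤ x by omega) : ((t:ℚ) ≤ (x:ℚ))))]
    push_cast; ring
  rw [e0, sumPoly _ _ _ _ _ (1-p) (x) (by omega)]
  have e1 : ∑ t ∈ Icc (x+1) (0), wx p t * |(x:ℚ) - (t:ℚ)| =
      ∑ t ∈ Icc (x+1) (0), (((-2:ℚ) * (p:ℚ) * (x:ℚ)) + ((-2:ℚ) * (x:ℚ) + (2:ℚ) * (p:ℚ)) * (t:ℚ) + ((2:ℚ)) * (t:ℚ)^2 + ((0:ℚ)) * (t:ℚ)^3 + ((0:ℚ)) * (t:ℚ)^4) := by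
    refine Finset.sum_congr rfl fun t ht => ?_
    simp only [Finset.mem_Icc] at ht
    rw [wx1 p t hp (by omega), abs_of_nonpos (sub_nonpos.mpr (by exact_mod_cast (show (x:ℤ) ≤ t by omega) : ((x:ℚ) ≤ (t:ℚ))))]
    push_cast; ring
  rw [e1, sumPoly _ _ _ _ _ (x+1) (0) (by omega)]
  have e2 : ∑ t ∈ Icc (0+1) (p), wx p t * |(x:ℚ) - (t:ℚ)| =
      ∑ t ∈ Icc (0+1) (p), (((-2:ℚ) * (p:ℚ) * (x:ℚ)) + ((2:ℚ) * (p:ℚ)) * (t:ℚ) + ((0:ℚ)) * (t:ℚ)^2 + ((0:ℚ)) * (t:ℚ)^3 + ((0:ℚ)) * (t:ℚ)^4) := by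
    refine Finset.sum_congr rfl fun t ht => ?_
    simp only [Finset.mem_Icc] at ht
    rw [wx2 p t hp (by omega) (by omega), abs_of_nonpos (sub_nonpos.mpr (by exact_mod_cast (show (x:ℤ) ≤ t by omega) : ((x:ℚ) ≤ (t:ℚ))))]
    push_cast; ring
  rw [e2, sumPoly _ _ _ _ _ (0+1) (p) (by omega)]
  have e3 : ∑ t ∈ Icc (p+1) (2*p - 1), wx p t * |(x:ℚ) - (t:ℚ)| =
      ∑ t ∈ Icc (p+1) (2*p - 1), (((-4:ℚ) * (p:ℚ) * (x:ℚ)) + ((2:ℚ) * (x:ℚ) + (4:ℚ) * (p:ℚ)) * (t:ℚ) + ((-2:ℚ)) * (t:ℚ)^2 + ((0:ℚ)) * (t:ℚ)^3 + ((0:ℚ)) * (t:ℚ)^4) := by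
    refine Finset.sum_congr rfl fun t ht => ?_
    simp only [Finset.mem_Icc] at ht
    rw [wx3 p t hp (by omega), abs_of_nonpos (sub_nonpos.mpr (by exact_mod_cast (show (x:ℤ) ≤ t by omega) : ((x:ℚ) ≤ (t:ℚ))))]
    push_cast; ring
  rw [e3, sumPoly _ _ _ _ _ (p+1) (2*p - 1) (by omega)]
  simp only [Phi]; push_cast; ring

lemma innerX2 (p x : ℤ) (hp : 2 ≤ p) (h0 : 1 ≤ x) (h1 : x ≤ p) :
    ∑ t ∈ Icc (1-p) (2*p - 1), wx p t * |(x:ℚ) - (t:ℚ)| = ((-2:ℚ)/3) * (p:ℚ) + (2:ℚ) * (p:ℚ) * (x:ℚ)^2 + (-2:ℚ) * (p:ℚ)^2 * (x:ℚ) + ((8:ℚ)/3) * (p:ℚ)^3 := by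
  rw [sum_Icc_split _ (1-p) (0) (2*p - 1) (by omega) (by omega)]
  rw [sum_Icc_split _ (0+1) (x) (2*p - 1) (by omega) (by omega)]
  rw [sum_Icc_split _ (x+1) (p) (2*p - 1) (by omega) (by omega)]
  have e0 : ∑ t ∈ Icc (1-p) (0), wx p t * |(x:ℚ) - (t:ℚ)| =
      ∑ t ∈ Icc (1-p) (0), (((2:ℚ) * (p:ℚ) * (x:ℚ)) + ((2:ℚ) * (x:ℚ) + (-2:ℚ) * (p:ℚ)) * (t:ℚ) + ((-2:ℚ)) * (t:ℚ)^2 + ((0:ℚ)) * (t:ℚ)^3 + ((0:ℚ)) * (t:ℚ)^4) := by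
    refine Finset.sum_congr rfl fun t ht => ?_
    simp only [Finset.mem_Icc] at ht
    rw [wx1 p t hp (by omega), abs_of_nonneg (sub_nonneg.mpr (by exact_mod_cast (show (t:ℤ) ≤ x by omega) : ((t:ℚ) ≤ (x:ℚ))))]
    push_cast; ring
  rw [e0, sumPoly _ _ _ _ _ (1-p) (0) (by omega)]
  have e1 : ∑ t ∈ Icc (0+1) (x), wx p t * |(x:ℚ) - (t:ℚ)| =
      ∑ t ∈ Icc (0+1) (x), (((2:ℚ) * (p:ℚ) * (x:ℚ)) + ((-2:ℚ) * (p:ℚ)) * (t:ℚ) + ((0:ℚ)) * (t:ℚ)^2 + ((0:ℚ)) * (t:ℚ)^3 + ((0:ℚ)) * (t:ℚ)^4) := by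
    refine Finset.sum_congr rfl fun t ht => ?_
    simp only [Finset.mem_Icc] at ht
    rw [wx2 p t hp (by omega) (by omega), abs_of_nonneg (sub_nonneg.mpr (by exact_mod_cast (show (t:ℤ) ≤ x by omega) : ((t:ℚ) ≤ (x:ℚ))))]
    push_cast; ring
  rw [e1, sumPoly _ _ _ _ _ (0+1) (x) (by omega)]
  have e2 : ∑ t ∈ Icc (x+1) (p), wx p t * |(x:ℚ) - (t:ℚ)| =
      ∑ t ∈ Icc (x+1) (p), (((-2:ℚ) * (p:ℚ) * (x:ℚ)) + ((2:ℚ) * (p:ℚ)) * (t:ℚ) + ((0:ℚ)) * (t:ℚ)^2 + ((0:ℚ)) * (t:ℚ)^3 + ((0:ℚ)) * (t:ℚ)^4) := by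
    refine Finset.sum_congr rfl fun t ht => ?_
    simp only [Finset.mem_Icc] at ht
    rw [wx2 p t hp (by omega) (by omega), abs_of_nonpos (sub_nonpos.mpr (by exact_mod_cast (show (x:ℤ) ≤ t by omega) : ((x:ℚ) ≤ (t:ℚ))))]
    push_cast; ring
  rw [e2, sumPoly _ _ _ _ _ (x+1) (p) (by omega)]
  have e3 : ∑ t ∈ Icc (p+1) (2*p - 1), wx p t * |(x:ℚ) - (t:ℚ)| =
      ∑ t ∈ Icc (p+1) (2*p - 1), (((-4:ℚ) * (p:ℚ) * (x:ℚ)) + ((2:ℚ) * (x:ℚ) + (4:ℚ) * (p:ℚ)) * (t:ℚ) + ((-2:ℚ)) * (t:ℚ)^2 + ((0:ℚ)) * (t:ℚ)^3 + ((0:ℚ)) * (t:ℚ)^4) := by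
    refine Finset.sum_congr rfl fun t ht => ?_
    simp only [Finset.mem_Icc] at ht
    rw [wx3 p t hp (by omega), abs_of_nonpos (sub_nonpos.mpr (by exact_mod_cast (show (x:ℤ) ≤ t by omega) : ((x:ℚ) ≤ (t:ℚ))))]
    push_cast; ring
  rw [e3, sumPoly _ _ _ _ _ (p+1) (2*p - 1) (by omega)]
  simp only [Phi]; push_cast; ring

lemma innerX3 (p x : ℤ) (hp : 2 ≤ p) (h0 : p + 1 ≤ x) (h1 : x ≤ 2*p - 1) :
    ∑ t ∈ Icc (1-p) (2*p - 1), wx p t * |(x:ℚ) - (t:ℚ)| = ((2:ℚ)/3) * (x:ℚ) + ((-2:ℚ)/3) * (x:ℚ)^3 + ((-4:ℚ)/3) * (p:ℚ) + (4:ℚ) * (p:ℚ) * (x:ℚ)^2 + (-4:ℚ) * (p:ℚ)^2 * (x:ℚ) + ((10:ℚ)/3) * (p:ℚ)^3 := by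
  rw [sum_Icc_split _ (1-p) (0) (2*p - 1) (by omega) (by omega)]
  rw [sum_Icc_split _ (0+1) (p) (2*p - 1) (by omega) (by omega)]
  rw [sum_Icc_split _ (p+1) (x) (2*p - 1) (by omega) (by omega)]
  have e0 : ∑ t ∈ Icc (1-p) (0), wx p t * |(x:ℚ) - (t:ℚ)| =
      ∑ t ∈ Icc (1-p) (0), (((2:ℚ) * (p:ℚ) * (x:ℚ)) + ((2:ℚ) * (x:ℚ) + (-2:ℚ) * (p:ℚ)) * (t:ℚ) + ((-2:ℚ)) * (t:ℚ)^2 + ((0:ℚ)) * (t:ℚ)^3 + ((0:ℚ)) * (t:ℚ)^4) := by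
    refine Finset.sum_congr rfl fun t ht => ?_
    simp only [Finset.mem_Icc] at ht
    rw [wx1 p t hp (by omega), abs_of_nonneg (sub_nonneg.mpr (by exact_mod_cast (show (t:ℤ) ≤ x by omega) : ((t:ℚ) ≤ (x:ℚ))))]
    push_cast; ring
  rw [e0, sumPoly _ _ _ _ _ (1-p) (0) (by omega)]
  have e1 : ∑ t ∈ Icc (0+1) (p), wx p t * |(x:ℚ) - (t:ℚ)| =
      ∑ t ∈ Icc (0+1) (p), (((2:ℚ) * (p:ℚ) * (x:ℚ)) + ((-2:ℚ) * (p:ℚ)) * (t:ℚ) + ((0:ℚ)) * (t:ℚ)^2 + ((0:ℚ)) * (t:ℚ)^3 + ((0:ℚ)) * (t:ℚ)^4) := by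
    refine Finset.sum_congr rfl fun t ht => ?_
    simp only [Finset.mem_Icc] at ht
    rw [wx2 p t hp (by omega) (by omega), abs_of_nonneg (sub_nonneg.mpr (by exact_mod_cast (show (t:ℤ) ≤ x by omega) : ((t:ℚ) ≤ (x:ℚ))))]
    push_cast; ring
  rw [e1, sumPoly _ _ _ _ _ (0+1) (p) (by omega)]
  have e2 : ∑ t ∈ Icc (p+1) (x), wx p t * |(x:ℚ) - (t:ℚ)| =
      ∑ t ∈ Icc (p+1) (x), (((4:ℚ) * (p:ℚ) * (x:ℚ)) + ((-2:ℚ) * (x:ℚ) + (-4:ℚ) * (p:ℚ)) * (t:ℚ) + ((2:ℚ)) * (t:ℚ)^2 + ((0:ℚ)) * (t:ℚ)^3 + ((0:ℚ)) * (t:ℚ)^4) := by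
    refine Finset.sum_congr rfl fun t ht => ?_
    simp only [Finset.mem_Icc] at ht
    rw [wx3 p t hp (by omega), abs_of_nonneg (sub_nonneg.mpr (by exact_mod_cast (show (t:ℤ) ≤ x by omega) : ((t:ℚ) ≤ (x:ℚ))))]
    push_cast; ring
  rw [e2, sumPoly _ _ _ _ _ (p+1) (x) (by omega)]
  have e3 : ∑ t ∈ Icc (x+1) (2*p - 1), wx p t * |(x:ℚ) - (t:ℚ)| =
      ∑ t ∈ Icc (x+1) (2*p - 1), (((-4:ℚ) * (p:ℚ) * (x:ℚ)) + ((2:ℚ) * (x:ℚ) + (4:ℚ) * (p:ℚ)) * (t:ℚ) + ((-2:ℚ)) * (t:ℚ)^2 + ((0:ℚ)) * (t:ℚ)^3 + ((0:ℚ)) * (t:ℚ)^4) := by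
    refine Finset.sum_congr rfl fun t ht => ?_
    simp only [Finset.mem_Icc] at ht
    rw [wx3 p t hp (by omega), abs_of_nonpos (sub_nonpos.mpr (by exact_mod_cast (show (x:ℤ) ≤ t by omega) : ((x:ℚ) ≤ (t:ℚ))))]
    push_cast; ring
  rw [e3, sumPoly _ _ _ _ _ (x+1) (2*p - 1) (by omega)]
  simp only [Phi]; push_cast; ring

lemma outerY (p : ℤ) (hp : 2 ≤ p) :
    ∑ v ∈ Icc (0) (2*p - 1), wy p v * ∑ t ∈ Icc (0) (2*p - 1), wy p t * |(v:ℚ) - (t:ℚ)| = ((2:ℚ)/15) * (p:ℚ) + ((-4:ℚ)/3) * (p:ℚ)^3 + ((46:ℚ)/5) * (p:ℚ)^5 := by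
  rw [sum_Icc_split _ (0) (p-1) (2*p - 1) (by omega) (by omega)]
  have e0 : ∑ v ∈ Icc (0) (p-1), wy p v * ∑ t ∈ Icc (0) (2*p - 1), wy p t * |(v:ℚ) - (t:ℚ)| =
      ∑ v ∈ Icc (0) (p-1), (((-2:ℚ) * (p:ℚ)^2 + (2:ℚ) * (p:ℚ)^3 + (4:ℚ) * (p:ℚ)^4) + (((1:ℚ)/3) + ((4:ℚ)/3) * (p:ℚ) + (-7:ℚ) * (p:ℚ)^2 + (4:ℚ) * (p:ℚ)^3) * (v:ℚ) + (((5:ℚ)/3) + (4:ℚ) * (p:ℚ) + (-7:ℚ) * (p:ℚ)^2) * (v:ℚ)^2 + (((8:ℚ)/3) + ((8:ℚ)/3) * (p:ℚ)) * (v:ℚ)^3 + (((4:ℚ)/3)) * (v:ℚ)^4) := by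
    refine Finset.sum_congr rfl fun v hv => ?_
    simp only [Finset.mem_Icc] at hv
    rw [innerY1 p v hp (by omega) (by omega), wy_low p v hp (by omega)]
    push_cast; ring
  rw [e0, sumPoly _ _ _ _ _ (0) (p-1) (by omega)]
  have e1 : ∑ v ∈ Icc (p-1+1) (2*p - 1), wy p v * ∑ t ∈ Icc (0) (2*p - 1), wy p t * |(v:ℚ) - (t:ℚ)| =
      ∑ v ∈ Icc (p-1+1) (2*p - 1), ((((-2:ℚ)/3) * (p:ℚ) + ((22:ℚ)/3) * (p:ℚ)^2 + ((-76:ℚ)/3) * (p:ℚ)^3 + ((80:ℚ)/3) * (p:ℚ)^4) + (((1:ℚ)/3) + (-8:ℚ) * (p:ℚ) + (41:ℚ) * (p:ℚ)^2 + ((-152:ℚ)/3) * (p:ℚ)^3) * (v:ℚ) + (((5:ℚ)/3) + (-20:ℚ) * (p:ℚ) + (41:ℚ) * (p:ℚ)^2) * (v:ℚ)^2 + (((8:ℚ)/3) + ((-40:ℚ)/3) * (p:ℚ)) * (v:ℚ)^3 + (((4:ℚ)/3)) * (v:ℚ)^4) := by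
    refine Finset.sum_congr rfl fun v hv => ?_
    simp only [Finset.mem_Icc] at hv
    rw [innerY2 p v hp (by omega) (by omega), wy_high p v hp (by omega)]
    push_cast; ring
  rw [e1, sumPoly _ _ _ _ _ (p-1+1) (2*p - 1) (by omega)]
  simp only [Phi]; push_cast; ring

lemma outerX (p : ℤ) (hp : 2 ≤ p) :
    ∑ v ∈ Icc (1-p) (2*p - 1), wx p v * ∑ t ∈ Icc (1-p) (2*p - 1), wx p t * |(v:ℚ) - (t:ℚ)| = ((-8:ℚ)/15) * (p:ℚ) + ((-10:ℚ)/3) * (p:ℚ)^3 + ((178:ℚ)/15) * (p:ℚ)^5 := by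
  rw [sum_Icc_split _ (1-p) (0) (2*p - 1) (by omega) (by omega)]
  rw [sum_Icc_split _ (0+1) (p) (2*p - 1) (by omega) (by omega)]
  have e0 : ∑ v ∈ Icc (1-p) (0), wx p v * ∑ t ∈ Icc (1-p) (2*p - 1), wx p t * |(v:ℚ) - (t:ℚ)| =
      ∑ v ∈ Icc (1-p) (0), ((((-4:ℚ)/3) * (p:ℚ)^2 + ((16:ℚ)/3) * (p:ℚ)^4) + (((-8:ℚ)/3) * (p:ℚ) + ((4:ℚ)/3) * (p:ℚ)^3) * (v:ℚ) + (((-4:ℚ)/3)) * (v:ℚ)^2 + (((16:ℚ)/3) * (p:ℚ)) * (v:ℚ)^3 + (((4:ℚ)/3)) * (v:ℚ)^4) := by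
    refine Finset.sum_congr rfl fun v hv => ?_
    simp only [Finset.mem_Icc] at hv
    rw [innerX1 p v hp (by omega) (by omega), wx1 p v hp (by omega)]
    push_cast; ring
  rw [e0, sumPoly _ _ _ _ _ (1-p) (0) (by omega)]
  have e1 : ∑ v ∈ Icc (0+1) (p), wx p v * ∑ t ∈ Icc (1-p) (2*p - 1), wx p t * |(v:ℚ) - (t:ℚ)| =
      ∑ v ∈ Icc (0+1) (p), ((((-4:ℚ)/3) * (p:ℚ)^2 + ((16:ℚ)/3) * (p:ℚ)^4) + ((-4:ℚ) * (p:ℚ)^3) * (v:ℚ) + ((4:ℚ) * (p:ℚ)^2) * (v:ℚ)^2 + ((0:ℚ)) * (v:ℚ)^3 + ((0:ℚ)) * (v:ℚ)^4) := by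
    refine Finset.sum_congr rfl fun v hv => ?_
    simp only [Finset.mem_Icc] at hv
    rw [innerX2 p v hp (by omega) (by omega), wx2 p v hp (by omega) (by omega)]
    push_cast; ring
  rw [e1, sumPoly _ _ _ _ _ (0+1) (p) (by omega)]
  have e2 : ∑ v ∈ Icc (p+1) (2*p - 1), wx p v * ∑ t ∈ Icc (1-p) (2*p - 1), wx p t * |(v:ℚ) - (t:ℚ)| =
      ∑ v ∈ Icc (p+1) (2*p - 1), ((((-16:ℚ)/3) * (p:ℚ)^2 + ((40:ℚ)/3) * (p:ℚ)^4) + (((16:ℚ)/3) * (p:ℚ) + ((-68:ℚ)/3) * (p:ℚ)^3) * (v:ℚ) + (((-4:ℚ)/3) + (24:ℚ) * (p:ℚ)^2) * (v:ℚ)^2 + (((-32:ℚ)/3) * (p:ℚ)) * (v:ℚ)^3 + (((4:ℚ)/3)) * (v:ℚ)^4) := by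
    refine Finset.sum_congr rfl fun v hv => ?_
    simp only [Finset.mem_Icc] at hv
    rw [innerX3 p v hp (by omega) (by omega), wx3 p v hp (by omega)]
    push_cast; ring
  rw [e2, sumPoly _ _ _ _ _ (p+1) (2*p - 1) (by omega)]
  simp only [Phi]; push_cast; ring


lemma toNat_cast_q (a : ℤ) (h : 0 ≤ a) : ((a.toNat : ℕ) : ℚ) = (a : ℚ) := by
  exact_mod_cast Int.toNat_of_nonneg h

lemma mem_hex_rows (p : ℤ) (hp : 2 ≤ p) (z : ℤ × ℤ) :
    z ∈ hexRegion p ↔ (0 ≤ z.2 ∧ z.2 ≤ 2*p - 1 ∧ rlo p z.2 ≤ z.1 ∧ z.1 ≤ rhi p z.2) := by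
  simp only [hexRegion, Finset.mem_filter, Finset.mem_product, Finset.mem_Icc, rlo, rhi]
  split_ifs <;> omega

lemma mem_hex_cols (p : ℤ) (hp : 2 ≤ p) (z : ℤ × ℤ) :
    z ∈ hexRegion p ↔ (1 - p ≤ z.1 ∧ z.1 ≤ 2*p - 1 ∧ clo p z.1 ≤ z.2 ∧ z.2 ≤ chi p z.1) := by
  simp only [hexRegion, Finset.mem_filter, Finset.mem_product, Finset.mem_Icc, clo, chi]
  split_ifs <;> omega

lemma sum_rows (p : ℤ) (hp : 2 ≤ p) (F : ℤ × ℤ → ℚ) :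
    ∑ z ∈ hexRegion p, F z = ∑ y ∈ Icc 0 (2*p - 1), ∑ x ∈ Icc (rlo p y) (rhi p y), F (x, y) := by
  rw [Finset.sum_sigma']
  refine Finset.sum_nbij' (fun z => ⟨z.2, z.1⟩) (fun q => (q.2, q.1)) ?_ ?_ ?_ ?_ ?_
  · intro z hz
    rw [mem_hex_rows p hp] at hz
    simp only [Finset.mem_sigma, Finset.mem_Icc]
    exact ⟨⟨hz.1, hz.2.1⟩, hz.2.2.1, hz.2.2.2⟩
  · intro q hq
    simp only [Finset.mem_sigma, Finset.mem_Icc] at hq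
    rw [mem_hex_rows p hp]
    exact ⟨hq.1.1, hq.1.2, hq.2.1, hq.2.2⟩
  · intro z _; rfl
  · intro q _; rfl
  · intro z _; rfl

lemma sum_cols (p : ℤ) (hp : 2 ≤ p) (F : ℤ × ℤ → ℚ) :
    ∑ z ∈ hexRegion p, F z = ∑ x ∈ Icc (1-p) (2*p - 1), ∑ y ∈ Icc (clo p x) (chi p x), F (x, y) := by
  rw [Finset.sum_sigma']
  refine Finset.sum_nbij' (fun z => ⟨z.1, z.2⟩) (fun q => (q.1, q.2)) ?_ ?_ ?_ ?_ ?_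
  · intro z hz
    rw [mem_hex_cols p hp] at hz
    simp only [Finset.mem_sigma, Finset.mem_Icc]
    exact ⟨⟨hz.1, hz.2.1⟩, hz.2.2.1, hz.2.2.2⟩
  · intro q hq
    simp only [Finset.mem_sigma, Finset.mem_Icc] at hq
    rw [mem_hex_cols p hp]
    exact ⟨hq.1.1, hq.1.2, hq.2.1, hq.2.2⟩
  · intro z _; rfl
  · intro q _; rfl
  · intro z _; rfl

/-- For `p ≥ 2`, the Wiener index of the hexagonal square-cell configuration
`H(p)` (sum of L¹ = graph distances over unordered pairs) equals
`(158p⁵ − 35p³ − 3p)/15`. -/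
theorem wiener_hexagonal (p : ℤ) (hp : 2 ≤ p) :
    (∑ u ∈ hexRegion p, ∑ v ∈ hexRegion p, ((|u.1 - v.1| + |u.2 - v.2| : ℤ) : ℚ)) / 2 =
      (158 * (p : ℚ) ^ 5 - 35 * (p : ℚ) ^ 3 - 3 * (p : ℚ)) / 15 := by
  have hsplit : (∑ u ∈ hexRegion p, ∑ v ∈ hexRegion p, ((|u.1 - v.1| + |u.2 - v.2| : ℤ) : ℚ))
      = (∑ u ∈ hexRegion p, ∑ v ∈ hexRegion p, |(u.1:ℚ) - (v.1:ℚ)|)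
        + (∑ u ∈ hexRegion p, ∑ v ∈ hexRegion p, |(u.2:ℚ) - (v.2:ℚ)|) := by
    rw [← Finset.sum_add_distrib]
    refine Finset.sum_congr rfl fun u _ => ?_
    rw [← Finset.sum_add_distrib]
    refine Finset.sum_congr rfl fun v _ => ?_
    push_cast
    ring
  have hA : (∑ u ∈ hexRegion p, ∑ v ∈ hexRegion p, |(u.1:ℚ) - (v.1:ℚ)|)
      = ∑ v ∈ Icc (1-p) (2*p - 1), wx p v * ∑ t ∈ Icc (1-p) (2*p - 1), wx p t * |(v:ℚ) - (t:ℚ)| := by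
    have hinner : ∀ u : ℤ × ℤ, (∑ v ∈ hexRegion p, |(u.1:ℚ) - (v.1:ℚ)|)
        = ∑ t ∈ Icc (1-p) (2*p - 1), wx p t * |(u.1:ℚ) - (t:ℚ)| := by
      intro u
      rw [sum_cols p hp (fun v => |(u.1:ℚ) - (v.1:ℚ)|)]
      refine Finset.sum_congr rfl fun t ht => ?_
      simp only [Finset.mem_Icc] at ht
      show (∑ _y ∈ Icc (clo p t) (chi p t), |(u.1:ℚ) - (t:ℚ)|) = _
      rw [Finset.sum_const, nsmul_eq_mul, Int.card_Icc,
        toNat_cast_q _ (by simp only [chi, clo]; split_ifs <;> omega)]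
      simp only [wx]; push_cast; ring
    calc (∑ u ∈ hexRegion p, ∑ v ∈ hexRegion p, |(u.1:ℚ) - (v.1:ℚ)|)
        = ∑ u ∈ hexRegion p, ∑ t ∈ Icc (1-p) (2*p - 1), wx p t * |(u.1:ℚ) - (t:ℚ)| :=
          Finset.sum_congr rfl fun u _ => hinner u
      _ = ∑ v ∈ Icc (1-p) (2*p - 1), wx p v * ∑ t ∈ Icc (1-p) (2*p - 1), wx p t * |(v:ℚ) - (t:ℚ)| := by
          rw [sum_cols p hp (fun u => ∑ t ∈ Icc (1-p) (2*p - 1), wx p t * |(u.1:ℚ) - (t:ℚ)|)]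
          refine Finset.sum_congr rfl fun v hv => ?_
          simp only [Finset.mem_Icc] at hv
          show (∑ _y ∈ Icc (clo p v) (chi p v), ∑ t ∈ Icc (1-p) (2*p - 1), wx p t * |(v:ℚ) - (t:ℚ)|) = _
          rw [Finset.sum_const, nsmul_eq_mul, Int.card_Icc,
            toNat_cast_q _ (by simp only [chi, clo]; split_ifs <;> omega)]
          simp only [wx]; push_cast; ring
  have hB : (∑ u ∈ hexRegion p, ∑ v ∈ hexRegion p, |(u.2:ℚ) - (v.2:ℚ)|)
      = ∑ v ∈ Icc 0 (2*p - 1), wy p v * ∑ t ∈ Icc 0 (2*p - 1), wy p t * |(v:ℚ) - (t:ℚ)| := by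
    have hinner : ∀ u : ℤ × ℤ, (∑ v ∈ hexRegion p, |(u.2:ℚ) - (v.2:ℚ)|)
        = ∑ t ∈ Icc 0 (2*p - 1), wy p t * |(u.2:ℚ) - (t:ℚ)| := by
      intro u
      rw [sum_rows p hp (fun v => |(u.2:ℚ) - (v.2:ℚ)|)]
      refine Finset.sum_congr rfl fun t ht => ?_
      simp only [Finset.mem_Icc] at ht
      show (∑ _x ∈ Icc (rlo p t) (rhi p t), |(u.2:ℚ) - (t:ℚ)|) = _
      rw [Finset.sum_const, nsmul_eq_mul, Int.card_Icc,
        toNat_cast_q _ (by simp only [rhi, rlo]; split_ifs <;> omega)]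
      simp only [wy]; push_cast; ring
    calc (∑ u ∈ hexRegion p, ∑ v ∈ hexRegion p, |(u.2:ℚ) - (v.2:ℚ)|)
        = ∑ u ∈ hexRegion p, ∑ t ∈ Icc 0 (2*p - 1), wy p t * |(u.2:ℚ) - (t:ℚ)| :=
          Finset.sum_congr rfl fun u _ => hinner u
      _ = ∑ v ∈ Icc 0 (2*p - 1), wy p v * ∑ t ∈ Icc 0 (2*p - 1), wy p t * |(v:ℚ) - (t:ℚ)| := by
          rw [sum_rows p hp (fun u => ∑ t ∈ Icc 0 (2*p - 1), wy p t * |(u.2:ℚ) - (t:ℚ)|)]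
          refine Finset.sum_congr rfl fun v hv => ?_
          simp only [Finset.mem_Icc] at hv
          show (∑ _x ∈ Icc (rlo p v) (rhi p v), ∑ t ∈ Icc 0 (2*p - 1), wy p t * |(v:ℚ) - (t:ℚ)|) = _
          rw [Finset.sum_const, nsmul_eq_mul, Int.card_Icc,
            toNat_cast_q _ (by simp only [rhi, rlo]; split_ifs <;> omega)]
          simp only [wy]; push_cast; ring
  rw [hsplit, hA, hB, outerX p hp, outerY p hp]
  ring
end

section
/- For integers p ≥ 2, the average distance of the hexagonal square-cell configuration H(p) equals (158p⁴ − 35p² − 3)/(120p³ − 30p). -/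
open Finset

lemma sum_Icc_eq_range (f : ℤ → ℚ) (a : ℤ) : ∀ n : ℕ,
    ∑ x ∈ Icc a (a + n - 1), f x = ∑ i ∈ range n, f (a + i) := by
  intro n
  induction n with
  | zero => rw [Finset.Icc_eq_empty (by omega)]; simp
  | succ n ih =>
    have h1 : Icc a (a + (n + 1 : ℕ) - 1) = insert (a + n) (Icc a (a + n - 1)) := by
      ext x; simp only [mem_Icc, mem_insert]; push_cast; omega
    rw [h1, Finset.sum_insert (by simp only [mem_Icc]; omega), Finset.sum_range_succ, ih,
      add_comm]

lemma sum_Icc_eq_range' (f : ℤ → ℚ) (a b : ℤ) (h : a ≤ b + 1) :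
    ∑ x ∈ Icc a b, f x = ∑ i ∈ range (b + 1 - a).toNat, f (a + i) := by
  have h2 : a + ((b + 1 - a).toNat : ℤ) - 1 = b := by omega
  have h3 := sum_Icc_eq_range f a (b + 1 - a).toNat
  rw [h2] at h3
  exact h3

lemma abs_left (t : ℤ) : ∀ k : ℕ,
    ∑ x ∈ Icc (t - k) t, ((|t - x| : ℤ) : ℚ) = (k * (k + 1)) / 2 := by
  intro k
  induction k with
  | zero => simp
  | succ k ih =>
    have h1 : Icc (t - (k + 1 : ℕ)) t = insert (t - (k + 1 : ℕ)) (Icc (t - k) t) := by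
      ext x; simp only [mem_Icc, mem_insert]; push_cast; omega
    rw [h1, Finset.sum_insert (by simp only [mem_Icc]; push_cast; omega), ih]
    have h2 : |t - (t - ((k : ℤ) + 1))| = (k : ℤ) + 1 := by
      rw [abs_of_nonneg] <;> omega
    push_cast [h2]
    ring

lemma abs_right (t : ℤ) : ∀ m : ℕ,
    ∑ x ∈ Icc (t + 1) (t + m), ((|t - x| : ℤ) : ℚ) = (m * (m + 1)) / 2 := by
  intro m
  induction m with
  | zero => rw [Finset.Icc_eq_empty (by omega)]; simp
  | succ m ih =>
    have h1 : Icc (t + 1) (t + (m + 1 : ℕ)) = insert (t + (m + 1 : ℕ)) (Icc (t + 1) (t + m)) := by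
      ext x; simp only [mem_Icc, mem_insert]; push_cast; omega
    rw [h1, Finset.sum_insert (by simp only [mem_Icc]; push_cast; omega), ih]
    have h2 : |t - (t + ((m : ℤ) + 1))| = (m : ℤ) + 1 := by
      rw [abs_of_nonpos] <;> omega
    push_cast [h2]
    ring

lemma abs_sum (a b t : ℤ) (h1 : a ≤ t) (h2 : t ≤ b) :
    ∑ x ∈ Icc a b, ((|t - x| : ℤ) : ℚ) =
      ((t : ℚ) - a) * ((t : ℚ) - a + 1) / 2 + ((b : ℚ) - t) * ((b : ℚ) - t + 1) / 2 := by
  have hsplit : Icc a b = Icc a t ∪ Icc (t + 1) b := by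
    ext x; simp only [mem_Icc, mem_union]; omega
  rw [hsplit, Finset.sum_union (by
    simp only [Finset.disjoint_left, mem_Icc]; intro x hx hx2; omega)]
  have e1 : t - ((t - a).toNat : ℤ) = a := by omega
  have h3 := abs_left t (t - a).toNat
  rw [e1] at h3
  have e2 : t + ((b - t).toNat : ℤ) = b := by omega
  have h4 := abs_right t (b - t).toNat
  rw [e2] at h4
  rw [h3, h4]
  have c1 : (((t - a).toNat : ℤ) : ℚ) = (t : ℚ) - a := by
    push_cast [Int.toNat_of_nonneg (by omega : (0:ℤ) ≤ t - a)]; ring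
  have c2 : (((b - t).toNat : ℤ) : ℚ) = (b : ℚ) - t := by
    push_cast [Int.toNat_of_nonneg (by omega : (0:ℤ) ≤ b - t)]; ring
  push_cast at c1 c2 ⊢
  rw [c1, c2]

noncomputable def Xc (p a1 a2 : ℤ) : ℚ :=
  ((p : ℚ) - a1 - a2) * ((p : ℚ) - a1 - a2 + 1) * ((p : ℚ) - a1 - a2 + 2) / 3 -
    (((|a1 - a2| : ℤ) : ℚ) ^ 3 - ((|a1 - a2| : ℤ) : ℚ)) / 3

lemma Xc_comm (p a1 a2 : ℤ) : Xc p a1 a2 = Xc p a2 a1 := by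
  unfold Xc; rw [abs_sub_comm]; ring

lemma CXlem (A C P : ℚ) : ∀ n : ℕ, ∑ i ∈ range n,
    ((C + (i : ℚ) - A) * (C + (i : ℚ) - A + 1) / 2 +
      (P - A - (C + (i : ℚ))) * (P - A - (C + (i : ℚ)) + 1) / 2) =
    (1/6) * (n : ℚ) + (-1/2) * (n : ℚ)^2 + (1/3) * (n : ℚ)^3
      - C * (n : ℚ) + C * (n : ℚ)^2 + C^2 * (n : ℚ)
      - A * (n : ℚ) + A^2 * (n : ℚ)
      + P * (n : ℚ) + (-1/2) * P * (n : ℚ)^2 - P * C * (n : ℚ) - P * A * (n : ℚ)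
      + (1/2) * P^2 * (n : ℚ) := by
  intro n
  induction n with
  | zero => simp
  | succ n ih => rw [Finset.sum_range_succ, ih]; push_cast; ring

lemma XL' (p a1 a2 : ℤ) (h12 : a1 ≤ a2) (h2 : a2 ≤ 0) (hp : 0 ≤ p) :
    ∑ x1 ∈ Icc a1 (p - a1), ∑ x2 ∈ Icc a2 (p - a2), ((|x1 - x2| : ℤ) : ℚ) = Xc p a1 a2 := by
  rw [Finset.sum_comm]
  have step1 : ∑ x2 ∈ Icc a2 (p - a2), ∑ x1 ∈ Icc a1 (p - a1), ((|x1 - x2| : ℤ) : ℚ) =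
      ∑ x2 ∈ Icc a2 (p - a2),
        (((x2 : ℚ) - a1) * ((x2 : ℚ) - a1 + 1) / 2 +
          (((p : ℚ) - a1) - x2) * (((p : ℚ) - a1) - x2 + 1) / 2) := by
    apply Finset.sum_congr rfl
    intro x2 hx2
    simp only [mem_Icc] at hx2
    have e : ∑ x1 ∈ Icc a1 (p - a1), ((|x1 - x2| : ℤ) : ℚ) =
        ∑ x1 ∈ Icc a1 (p - a1), ((|x2 - x1| : ℤ) : ℚ) := by
      apply Finset.sum_congr rfl; intro x _; rw [abs_sub_comm]
    rw [e, abs_sum a1 (p - a1) x2 (by omega) (by omega)]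
    push_cast; ring
  rw [step1, sum_Icc_eq_range' _ a2 (p - a2) (by omega)]
  have step2 : ∑ i ∈ range (p - a2 + 1 - a2).toNat,
      (((((a2 + (i:ℤ)) : ℤ) : ℚ) - a1) * (((a2 + (i:ℤ) : ℤ) : ℚ) - a1 + 1) / 2
        + (((p : ℚ) - a1) - ((a2 + (i:ℤ) : ℤ) : ℚ)) * (((p : ℚ) - a1) - ((a2 + (i:ℤ) : ℤ) : ℚ) + 1) / 2)
      = ∑ i ∈ range (p - a2 + 1 - a2).toNat,
        (((a2:ℚ) + (i : ℚ) - (a1:ℚ)) * ((a2:ℚ) + (i : ℚ) - (a1:ℚ) + 1) / 2 +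
          ((p:ℚ) - (a1:ℚ) - ((a2:ℚ) + (i : ℚ))) * ((p:ℚ) - (a1:ℚ) - ((a2:ℚ) + (i : ℚ)) + 1) / 2) := by
    apply Finset.sum_congr rfl; intro i _; push_cast; ring
  rw [step2, CXlem]
  have hn : (((p - a2 + 1 - a2).toNat : ℕ) : ℚ) = (p : ℚ) + 1 - 2 * a2 := by
    have hi : ((p - a2 + 1 - a2).toNat : ℤ) = p - a2 + 1 - a2 := by omega
    have h := congrArg (fun z : ℤ => (z : ℚ)) hi
    push_cast at h
    linarith [h]
  rw [hn]
  have habs : |a1 - a2| = a2 - a1 := by rw [abs_of_nonpos] <;> omega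
  unfold Xc
  rw [habs]
  push_cast
  ring

lemma XL (p a1 a2 : ℤ) (h1 : a1 ≤ 0) (h2 : a2 ≤ 0) (hp : 0 ≤ p) :
    ∑ x1 ∈ Icc a1 (p - a1), ∑ x2 ∈ Icc a2 (p - a2), ((|x1 - x2| : ℤ) : ℚ) = Xc p a1 a2 := by
  rcases le_total a1 a2 with h | h
  · exact XL' p a1 a2 h h2 hp
  · rw [Finset.sum_comm]
    have e : ∀ x2 ∈ Icc a2 (p - a2), ∑ x1 ∈ Icc a1 (p - a1), ((|x1 - x2| : ℤ) : ℚ) =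
        ∑ x1 ∈ Icc a1 (p - a1), ((|x2 - x1| : ℤ) : ℚ) := by
      intro x2 _; apply Finset.sum_congr rfl; intro x _; rw [abs_sub_comm]
    rw [Finset.sum_congr rfl e, XL' p a2 a1 h h1 hp, Xc_comm]

def aRow (p y : ℤ) : ℤ := if y ≤ p - 1 then -y else y - 2 * p + 1

lemma rows (p : ℤ) (hp : 2 ≤ p) (f : ℤ × ℤ → ℚ) :
    ∑ z ∈ hexRegion p, f z =
      ∑ y ∈ Icc (0 : ℤ) (2 * p - 1), ∑ x ∈ Icc (aRow p y) (p - aRow p y), f (x, y) := by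
  have hset : hexRegion p = (Icc (0 : ℤ) (2 * p - 1)).biUnion
      (fun y => (Icc (aRow p y) (p - aRow p y)).image (fun x => (x, y))) := by
    ext z
    obtain ⟨x, y⟩ := z
    simp only [hexRegion, Finset.mem_filter, Finset.mem_product, Finset.mem_Icc,
      Finset.mem_biUnion, Finset.mem_image, Prod.mk.injEq, aRow]
    constructor
    · rintro ⟨⟨hx, hy⟩, h⟩
      refine ⟨y, ?_, x, ?_, rfl, rfl⟩
      · omega
      · split_ifs <;> omega
    · rintro ⟨y', hy', x', hx', rfl, rfl⟩
      split_ifs at hx' <;> refine ⟨⟨?_, ?_⟩, ?_⟩ <;> omega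
  rw [hset, Finset.sum_biUnion]
  · apply Finset.sum_congr rfl
    intro y _
    rw [Finset.sum_image]
    intro x _ x' _ h
    simpa using h
  · intro y1 _ y2 _ hne
    apply Finset.disjoint_left.2
    rintro z hz1 hz2
    simp only [Finset.mem_image] at hz1 hz2
    obtain ⟨x1, _, rfl⟩ := hz1
    obtain ⟨x2, _, h⟩ := hz2
    exact hne (congrArg Prod.snd h).symm

lemma pairing (p : ℤ) (hp : 2 ≤ p) (f : ℤ → ℚ) :
    ∑ y ∈ Icc (0 : ℤ) (2 * p - 1), f y =
      ∑ j ∈ Icc (0 : ℤ) (p - 1), (f (p - 1 - j) + f (p + j)) := by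
  have hsplit : Icc (0 : ℤ) (2 * p - 1) = Icc (0 : ℤ) (p - 1) ∪ Icc p (2 * p - 1) := by
    ext x; simp only [mem_Icc, mem_union]; omega
  rw [hsplit, Finset.sum_union (by
    simp only [Finset.disjoint_left, mem_Icc]; intro x hx hx2; omega)]
  have h1 : ∑ y ∈ Icc (0 : ℤ) (p - 1), f y = ∑ j ∈ Icc (0 : ℤ) (p - 1), f (p - 1 - j) := by
    have himg : Icc (0 : ℤ) (p - 1) = (Icc (0 : ℤ) (p - 1)).image (fun j => p - 1 - j) := by
      ext x
      simp only [mem_Icc, Finset.mem_image]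
      constructor
      · intro hx; exact ⟨p - 1 - x, by omega, by omega⟩
      · rintro ⟨j, hj, rfl⟩; omega
    calc ∑ y ∈ Icc (0 : ℤ) (p - 1), f y
        = ∑ y ∈ (Icc (0 : ℤ) (p - 1)).image (fun j => p - 1 - j), f y := by rw [← himg]
      _ = ∑ j ∈ Icc (0 : ℤ) (p - 1), f (p - 1 - j) :=
          Finset.sum_image (by intro x _ x' _ h; have h' : p - 1 - x = p - 1 - x' := h; omega)
  have h2 : ∑ y ∈ Icc p (2 * p - 1), f y = ∑ j ∈ Icc (0 : ℤ) (p - 1), f (p + j) := by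
    have himg : Icc p (2 * p - 1) = (Icc (0 : ℤ) (p - 1)).image (fun j => p + j) := by
      ext x
      simp only [mem_Icc, Finset.mem_image]
      constructor
      · intro hx; exact ⟨x - p, by omega, by omega⟩
      · rintro ⟨j, hj, rfl⟩; omega
    calc ∑ y ∈ Icc p (2 * p - 1), f y
        = ∑ y ∈ (Icc (0 : ℤ) (p - 1)).image (fun j => p + j), f y := by rw [himg]
      _ = ∑ j ∈ Icc (0 : ℤ) (p - 1), f (p + j) :=
          Finset.sum_image (by intro x _ x' _ h; have h' : p + x = p + x' := h; omega)
  rw [h1, h2, ← Finset.sum_add_distrib]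

lemma row_card (p a : ℤ) (ha : a ≤ 0) (hp : 0 ≤ p) :
    ∑ _x ∈ Icc a (p - a), (1 : ℚ) = (p : ℚ) + 1 - 2 * a := by
  rw [Finset.sum_const, nsmul_eq_mul, mul_one]
  rw [Int.card_Icc]
  have hi : ((p - a + 1 - a).toNat : ℤ) = p - a + 1 - a := by omega
  have h := congrArg (fun z : ℤ => (z : ℚ)) hi
  push_cast at h
  linarith [h]

lemma cell (p y1 y2 : ℤ) (hp : 2 ≤ p) (h1 : 0 ≤ y1) (h1' : y1 ≤ 2 * p - 1)
    (h2 : 0 ≤ y2) (h2' : y2 ≤ 2 * p - 1) :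
    ∑ x1 ∈ Icc (aRow p y1) (p - aRow p y1), ∑ x2 ∈ Icc (aRow p y2) (p - aRow p y2),
        ((|x1 - x2| + |y1 - y2| : ℤ) : ℚ) =
      Xc p (aRow p y1) (aRow p y2) +
        ((|y1 - y2| : ℤ) : ℚ) * ((p : ℚ) + 1 - 2 * (aRow p y1 : ℚ)) *
          ((p : ℚ) + 1 - 2 * (aRow p y2 : ℚ)) := by
  have ha1 : aRow p y1 ≤ 0 := by unfold aRow; split_ifs <;> omega
  have ha2 : aRow p y2 ≤ 0 := by unfold aRow; split_ifs <;> omega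
  have split1 : ∑ x1 ∈ Icc (aRow p y1) (p - aRow p y1), ∑ x2 ∈ Icc (aRow p y2) (p - aRow p y2),
      ((|x1 - x2| + |y1 - y2| : ℤ) : ℚ) =
      (∑ x1 ∈ Icc (aRow p y1) (p - aRow p y1), ∑ x2 ∈ Icc (aRow p y2) (p - aRow p y2),
        ((|x1 - x2| : ℤ) : ℚ)) +
      (∑ x1 ∈ Icc (aRow p y1) (p - aRow p y1), ∑ x2 ∈ Icc (aRow p y2) (p - aRow p y2),
        ((|y1 - y2| : ℤ) : ℚ)) := by
    rw [← Finset.sum_add_distrib]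
    apply Finset.sum_congr rfl
    intro x1 _
    rw [← Finset.sum_add_distrib]
    apply Finset.sum_congr rfl
    intro x2 _
    push_cast
    ring
  rw [split1, XL p (aRow p y1) (aRow p y2) ha1 ha2 (by omega)]
  have hconst : ∑ x1 ∈ Icc (aRow p y1) (p - aRow p y1), ∑ x2 ∈ Icc (aRow p y2) (p - aRow p y2),
      ((|y1 - y2| : ℤ) : ℚ) =
      ((|y1 - y2| : ℤ) : ℚ) * ((p : ℚ) + 1 - 2 * (aRow p y1 : ℚ)) *
        ((p : ℚ) + 1 - 2 * (aRow p y2 : ℚ)) := by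
    have inner : ∀ x1 : ℤ, ∑ x2 ∈ Icc (aRow p y2) (p - aRow p y2), ((|y1 - y2| : ℤ) : ℚ) =
        ((|y1 - y2| : ℤ) : ℚ) * ((p : ℚ) + 1 - 2 * (aRow p y2 : ℚ)) := by
      intro x1
      have := row_card p (aRow p y2) ha2 (by omega)
      calc ∑ x2 ∈ Icc (aRow p y2) (p - aRow p y2), ((|y1 - y2| : ℤ) : ℚ)
          = ∑ x2 ∈ Icc (aRow p y2) (p - aRow p y2), ((|y1 - y2| : ℤ) : ℚ) * 1 := by
            apply Finset.sum_congr rfl; intro _ _; ring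
        _ = ((|y1 - y2| : ℤ) : ℚ) * ∑ x2 ∈ Icc (aRow p y2) (p - aRow p y2), (1:ℚ) := by
            rw [Finset.mul_sum]
        _ = _ := by rw [this]
    rw [Finset.sum_congr rfl (fun x1 _ => inner x1), Finset.sum_const, nsmul_eq_mul,
      Int.card_Icc]
    have hi : ((p - aRow p y1 + 1 - aRow p y1).toNat : ℤ) = p - aRow p y1 + 1 - aRow p y1 := by
      omega
    have h := congrArg (fun z : ℤ => (z : ℚ)) hi
    push_cast at h
    rw [h]
    ring
  rw [hconst]

lemma aRow_low (p j : ℤ) (hj : 0 ≤ j) : aRow p (p - 1 - j) = j - p + 1 := by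
  unfold aRow; rw [if_pos (by omega)]; ring

lemma aRow_high (p j : ℤ) (hj : 0 ≤ j) (hp : 1 ≤ p) : aRow p (p + j) = j - p + 1 := by
  unfold aRow; rw [if_neg (by omega)]; ring

noncomputable def Rterm (p y1 y2 : ℤ) : ℚ :=
  Xc p (aRow p y1) (aRow p y2) +
    ((|y1 - y2| : ℤ) : ℚ) * ((p : ℚ) + 1 - 2 * ((aRow p y1 : ℤ) : ℚ)) *
      ((p : ℚ) + 1 - 2 * ((aRow p y2 : ℤ) : ℚ))

def gg1 (P J X : ℚ) : ℚ :=
  2 * ((J - X) + (X + J + 1)) * (3*P - 1 - 2*X) * (3*P - 1 - 2*J)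
    + (4/3) * ((3*P - 2 - X - J) * (3*P - 1 - X - J) * (3*P - X - J))
    - (4/3) * ((J - X)^3 - (J - X))

def gg2 (P J X : ℚ) : ℚ :=
  2 * ((X - J) + (X + J + 1)) * (3*P - 1 - 2*X) * (3*P - 1 - 2*J)
    + (4/3) * ((3*P - 2 - X - J) * (3*P - 1 - X - J) * (3*P - X - J))
    - (4/3) * ((X - J)^3 - (X - J))

def C1closed (P J N : ℚ) : ℚ :=
  (4/3)*N + 2*N^2 - (4/3)*N^3 + (4/3)*J*N + 8*J*N^2 - (8/3)*J*N^3 - 4*J^2*N + 8*J^2*N^2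
    - (8/3)*J^3*N - 8*P*N + 4*P*N^3 - 12*P*J*N - 12*P*J^2*N - 18*P^2*N^2 + 36*P^3*N

def C2closed (P J N : ℚ) : ℚ :=
  6*N + (14/3)*N^2 - (2/3)*N^4 + 16*J*N + 12*J*N^2 + (8/3)*J*N^3 + 16*J^2*N + 8*J^2*N^2
    + (16/3)*J^3*N - 12*P*N - 12*P*N^2 - 4*P*N^3 - 12*P*J*N - 12*P*J*N^2 - 18*P^2*N
    - 36*P^2*J*N + 36*P^3*N

def Hfun (P X : ℚ) : ℚ :=
  2*X + 4*X^2 + 4*X^3 + 2*X^4 - (2/3)*P - (28/3)*P*X - 24*P*X^2 - 16*P*X^3 + (2/3)*P^2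
    + 26*P^2*X + 26*P^2*X^2 - (46/3)*P^3 - (92/3)*P^3*X + (94/3)*P^4

def C3closed (P N : ℚ) : ℚ :=
  -(2/5)*N + (2/5)*N^5 + (10/3)*P*N^2 - 4*P*N^4 - 8*P^2*N + (26/3)*P^2*N^3
    - (46/3)*P^3*N^2 + (94/3)*P^4*N

lemma C1lem (P J : ℚ) : ∀ n : ℕ, ∑ i ∈ range n, gg1 P J (i : ℚ) = C1closed P J (n : ℚ) := by
  intro n
  induction n with
  | zero => simp [C1closed]
  | succ n ih =>
    rw [Finset.sum_range_succ, ih]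
    simp only [gg1, C1closed]
    push_cast
    ring

lemma C2lem (P J : ℚ) : ∀ n : ℕ,
    ∑ i ∈ range n, gg2 P J (J + 1 + (i : ℚ)) = C2closed P J (n : ℚ) := by
  intro n
  induction n with
  | zero => simp [C2closed]
  | succ n ih =>
    rw [Finset.sum_range_succ, ih]
    simp only [gg2, C2closed]
    push_cast
    ring

lemma C3lem (P : ℚ) : ∀ n : ℕ, ∑ i ∈ range n, Hfun P (i : ℚ) = C3closed P (n : ℚ) := by
  intro n
  induction n with
  | zero => simp [C3closed]
  | succ n ih =>
    rw [Finset.sum_range_succ, ih]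
    simp only [Hfun, C3closed]
    push_cast
    ring

lemma Ccardlem (P : ℚ) : ∀ n : ℕ,
    ∑ i ∈ range n, (6*P - 2 - 4*(i : ℚ)) = 6*P*(n : ℚ) - 2*(n : ℚ)^2 := by
  intro n
  induction n with
  | zero => simp
  | succ n ih =>
    rw [Finset.sum_range_succ, ih]
    push_cast
    ring

lemma toNat_cast_q_s7 (x : ℤ) (h : 0 ≤ x) : ((x.toNat : ℕ) : ℚ) = (x : ℚ) := by
  have hi : ((x.toNat : ℕ) : ℤ) = x := by omega
  have hq := congrArg (fun z : ℤ => (z : ℚ)) hi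
  push_cast at hq
  exact_mod_cast hq

lemma hex_card (p : ℤ) (hp : 2 ≤ p) : (((hexRegion p).card : ℕ) : ℚ) = 4 * (p : ℚ)^2 := by
  have h0 : (((hexRegion p).card : ℕ) : ℚ) = ∑ z ∈ hexRegion p, (1 : ℚ) := by
    rw [Finset.card_eq_sum_ones]; push_cast; rfl
  rw [h0, rows p hp (fun _ => (1 : ℚ))]
  have step : ∀ y ∈ Icc (0 : ℤ) (2 * p - 1),
      ∑ _x ∈ Icc (aRow p y) (p - aRow p y), (1 : ℚ) = (p : ℚ) + 1 - 2 * ((aRow p y : ℤ) : ℚ) := by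
    intro y hy
    simp only [mem_Icc] at hy
    exact row_card p (aRow p y) (by unfold aRow; split_ifs <;> omega) (by omega)
  rw [Finset.sum_congr rfl step, pairing p hp]
  have step2 : ∀ j ∈ Icc (0 : ℤ) (p - 1),
      (((p : ℚ) + 1 - 2 * ((aRow p (p - 1 - j) : ℤ) : ℚ)) +
        ((p : ℚ) + 1 - 2 * ((aRow p (p + j) : ℤ) : ℚ))) = 6 * (p : ℚ) - 2 - 4 * ((j : ℤ) : ℚ) := by
    intro j hj
    simp only [mem_Icc] at hj
    rw [aRow_low p j (by omega), aRow_high p j (by omega) (by omega)]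
    push_cast
    ring
  rw [Finset.sum_congr rfl step2,
    sum_Icc_eq_range' (fun j => 6 * (p : ℚ) - 2 - 4 * ((j : ℤ) : ℚ)) 0 (p - 1) (by omega)]
  have e' : ∀ i ∈ range ((p - 1 + 1 - 0).toNat),
      (6 * (p : ℚ) - 2 - 4 * (((0 : ℤ) + (i : ℤ) : ℤ) : ℚ)) = 6 * (p : ℚ) - 2 - 4 * (i : ℚ) := by
    intro i _; push_cast; ring
  rw [Finset.sum_congr rfl e', Ccardlem, toNat_cast_q_s7 (p - 1 + 1 - 0) (by omega)]
  push_cast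
  ring

lemma sumQ (p j1 : ℤ) (hp : 2 ≤ p) (hj1 : 0 ≤ j1) (hj1' : j1 ≤ p - 1) :
    ∑ j2 ∈ Icc (0 : ℤ) (p - 1),
      ((Rterm p (p - 1 - j1) (p - 1 - j2) + Rterm p (p - 1 - j1) (p + j2)) +
        (Rterm p (p + j1) (p - 1 - j2) + Rterm p (p + j1) (p + j2))) =
      Hfun (p : ℚ) ((j1 : ℤ) : ℚ) := by
  have hsplit : Icc (0 : ℤ) (p - 1) = Icc 0 j1 ∪ Icc (j1 + 1) (p - 1) := by
    ext x; simp only [mem_Icc, mem_union]; omega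
  rw [hsplit, Finset.sum_union (by
    simp only [Finset.disjoint_left, mem_Icc]; intro x hx hx2; omega)]
  have part1 : ∑ j2 ∈ Icc (0 : ℤ) j1,
      ((Rterm p (p - 1 - j1) (p - 1 - j2) + Rterm p (p - 1 - j1) (p + j2)) +
        (Rterm p (p + j1) (p - 1 - j2) + Rterm p (p + j1) (p + j2))) =
      C1closed (p : ℚ) (j1 : ℚ) ((j1 : ℚ) + 1) := by
    have e : ∀ j2 ∈ Icc (0 : ℤ) j1,
        ((Rterm p (p - 1 - j1) (p - 1 - j2) + Rterm p (p - 1 - j1) (p + j2)) +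
          (Rterm p (p + j1) (p - 1 - j2) + Rterm p (p + j1) (p + j2))) =
        gg1 (p : ℚ) (j1 : ℚ) ((j2 : ℤ) : ℚ) := by
      intro j2 hj2
      simp only [mem_Icc] at hj2
      simp only [Rterm, Xc, aRow_low p j1 (by omega), aRow_low p j2 (by omega),
        aRow_high p j1 (by omega) (by omega), aRow_high p j2 (by omega) (by omega)]
      have habsA : |j1 - p + 1 - (j2 - p + 1)| = j1 - j2 := by rw [abs_of_nonneg] <;> omega
      have h1 : |p - 1 - j1 - (p - 1 - j2)| = j1 - j2 := by rw [abs_of_nonpos] <;> omega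
      have h2 : |p - 1 - j1 - (p + j2)| = j1 + j2 + 1 := by rw [abs_of_nonpos] <;> omega
      have h3 : |p + j1 - (p - 1 - j2)| = j1 + j2 + 1 := by rw [abs_of_nonneg] <;> omega
      have h4 : |p + j1 - (p + j2)| = j1 - j2 := by rw [abs_of_nonneg] <;> omega
      rw [habsA, h1, h2, h3, h4]
      simp only [gg1]
      push_cast
      ring
    rw [Finset.sum_congr rfl e,
      sum_Icc_eq_range' (fun j2 => gg1 (p : ℚ) (j1 : ℚ) ((j2 : ℤ) : ℚ)) 0 j1 (by omega)]
    have e' : ∀ i ∈ range ((j1 + 1 - 0).toNat),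
        gg1 (p : ℚ) (j1 : ℚ) (((0 : ℤ) + (i : ℤ) : ℤ) : ℚ) = gg1 (p : ℚ) (j1 : ℚ) (i : ℚ) := by
      intro i _; norm_num
    rw [Finset.sum_congr rfl e', C1lem, toNat_cast_q_s7 (j1 + 1 - 0) (by omega)]
    norm_num
  have part2 : ∑ j2 ∈ Icc (j1 + 1) (p - 1),
      ((Rterm p (p - 1 - j1) (p - 1 - j2) + Rterm p (p - 1 - j1) (p + j2)) +
        (Rterm p (p + j1) (p - 1 - j2) + Rterm p (p + j1) (p + j2))) =
      C2closed (p : ℚ) (j1 : ℚ) ((p : ℚ) - 1 - (j1 : ℚ)) := by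
    have e : ∀ j2 ∈ Icc (j1 + 1) (p - 1),
        ((Rterm p (p - 1 - j1) (p - 1 - j2) + Rterm p (p - 1 - j1) (p + j2)) +
          (Rterm p (p + j1) (p - 1 - j2) + Rterm p (p + j1) (p + j2))) =
        gg2 (p : ℚ) (j1 : ℚ) ((j2 : ℤ) : ℚ) := by
      intro j2 hj2
      simp only [mem_Icc] at hj2
      simp only [Rterm, Xc, aRow_low p j1 (by omega), aRow_low p j2 (by omega),
        aRow_high p j1 (by omega) (by omega), aRow_high p j2 (by omega) (by omega)]
      have habsA : |j1 - p + 1 - (j2 - p + 1)| = j2 - j1 := by rw [abs_of_nonpos] <;> omega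
      have h1 : |p - 1 - j1 - (p - 1 - j2)| = j2 - j1 := by rw [abs_of_nonneg] <;> omega
      have h2 : |p - 1 - j1 - (p + j2)| = j1 + j2 + 1 := by rw [abs_of_nonpos] <;> omega
      have h3 : |p + j1 - (p - 1 - j2)| = j1 + j2 + 1 := by rw [abs_of_nonneg] <;> omega
      have h4 : |p + j1 - (p + j2)| = j2 - j1 := by rw [abs_of_nonpos] <;> omega
      rw [habsA, h1, h2, h3, h4]
      simp only [gg2]
      push_cast
      ring
    rw [Finset.sum_congr rfl e,
      sum_Icc_eq_range' (fun j2 => gg2 (p : ℚ) (j1 : ℚ) ((j2 : ℤ) : ℚ)) (j1 + 1) (p - 1)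
        (by omega)]
    have e' : ∀ i ∈ range ((p - 1 + 1 - (j1 + 1)).toNat),
        gg2 (p : ℚ) (j1 : ℚ) (((j1 + 1 + (i : ℤ)) : ℤ) : ℚ) =
          gg2 (p : ℚ) (j1 : ℚ) ((j1 : ℚ) + 1 + (i : ℚ)) := by
      intro i _; push_cast; ring_nf
    rw [Finset.sum_congr rfl e', C2lem, toNat_cast_q_s7 (p - 1 + 1 - (j1 + 1)) (by omega)]
    have : (((p - 1 + 1 - (j1 + 1)) : ℤ) : ℚ) = (p : ℚ) - 1 - (j1 : ℚ) := by push_cast; ring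
    rw [this]
  rw [part1, part2]
  simp only [C1closed, C2closed, Hfun]
  push_cast
  ring

lemma hex_sum (p : ℤ) (hp : 2 ≤ p) :
    ∑ u ∈ hexRegion p, ∑ v ∈ hexRegion p, ((|u.1 - v.1| + |u.2 - v.2| : ℤ) : ℚ) =
      (316 * (p : ℚ)^5 - 70 * (p : ℚ)^3 - 6 * (p : ℚ)) / 15 := by
  rw [rows p hp (fun u => ∑ v ∈ hexRegion p, ((|u.1 - v.1| + |u.2 - v.2| : ℤ) : ℚ))]
  have e1 : ∀ y1 ∈ Icc (0 : ℤ) (2 * p - 1),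
      (∑ x1 ∈ Icc (aRow p y1) (p - aRow p y1),
        ∑ v ∈ hexRegion p, ((|(x1, y1).1 - v.1| + |(x1, y1).2 - v.2| : ℤ) : ℚ)) =
      ∑ y2 ∈ Icc (0 : ℤ) (2 * p - 1), Rterm p y1 y2 := by
    intro y1 hy1
    simp only [mem_Icc] at hy1
    have einner : ∀ x1 ∈ Icc (aRow p y1) (p - aRow p y1),
        (∑ v ∈ hexRegion p, ((|(x1, y1).1 - v.1| + |(x1, y1).2 - v.2| : ℤ) : ℚ)) =
        ∑ y2 ∈ Icc (0 : ℤ) (2 * p - 1), ∑ x2 ∈ Icc (aRow p y2) (p - aRow p y2),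
          ((|x1 - x2| + |y1 - y2| : ℤ) : ℚ) := by
      intro x1 _
      rw [rows p hp (fun v => ((|(x1, y1).1 - v.1| + |(x1, y1).2 - v.2| : ℤ) : ℚ))]
    rw [Finset.sum_congr rfl einner, Finset.sum_comm]
    apply Finset.sum_congr rfl
    intro y2 hy2
    simp only [mem_Icc] at hy2
    have := cell p y1 y2 hp (by omega) (by omega) (by omega) (by omega)
    rw [this]
    rfl
  rw [Finset.sum_congr rfl e1, pairing p hp (fun y1 => ∑ y2 ∈ Icc (0 : ℤ) (2 * p - 1), Rterm p y1 y2)]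
  have e3 : ∀ j1 ∈ Icc (0 : ℤ) (p - 1),
      ((∑ y2 ∈ Icc (0 : ℤ) (2 * p - 1), Rterm p (p - 1 - j1) y2) +
        (∑ y2 ∈ Icc (0 : ℤ) (2 * p - 1), Rterm p (p + j1) y2)) =
      Hfun (p : ℚ) ((j1 : ℤ) : ℚ) := by
    intro j1 hj1
    simp only [mem_Icc] at hj1
    rw [pairing p hp (fun y2 => Rterm p (p - 1 - j1) y2),
      pairing p hp (fun y2 => Rterm p (p + j1) y2), ← Finset.sum_add_distrib]
    exact sumQ p j1 hp (by omega) (by omega)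
  rw [Finset.sum_congr rfl e3,
    sum_Icc_eq_range' (fun j1 => Hfun (p : ℚ) ((j1 : ℤ) : ℚ)) 0 (p - 1) (by omega)]
  have e' : ∀ i ∈ range ((p - 1 + 1 - 0).toNat),
      Hfun (p : ℚ) (((0 : ℤ) + (i : ℤ) : ℤ) : ℚ) = Hfun (p : ℚ) (i : ℚ) := by
    intro i _; norm_num
  rw [Finset.sum_congr rfl e', C3lem, toNat_cast_q_s7 (p - 1 + 1 - 0) (by omega)]
  simp only [C3closed]
  push_cast
  ring

/-- For `p ≥ 2`, the average distance of the hexagonal square-cell configuration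
`H(p)`, i.e. `2W/(|V|(|V|−1))`, equals `(158p⁴ − 35p² − 3)/(120p³ − 30p)`. -/
theorem avg_dist_hexagonal (p : ℤ) (hp : 2 ≤ p) :
    (∑ u ∈ hexRegion p, ∑ v ∈ hexRegion p, ((|u.1 - v.1| + |u.2 - v.2| : ℤ) : ℚ)) /
        (((hexRegion p).card : ℚ) * (((hexRegion p).card : ℚ) - 1)) =
      (158 * (p : ℚ) ^ 4 - 35 * (p : ℚ) ^ 2 - 3) / (120 * (p : ℚ) ^ 3 - 30 * (p : ℚ)) := by
  have hp' : (2 : ℚ) ≤ (p : ℚ) := by exact_mod_cast hp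
  rw [hex_sum p hp, hex_card p hp]
  have hpp : (4 : ℚ) ≤ (p : ℚ)^2 := by nlinarith
  have hppp : (8 : ℚ) ≤ (p : ℚ)^3 := by nlinarith
  have hd1 : (4 * (p : ℚ)^2) * (4 * (p : ℚ)^2 - 1) ≠ 0 := by
    intro h; nlinarith [hpp]
  have hd2 : (120 * (p : ℚ)^3 - 30 * (p : ℚ)) ≠ 0 := by
    intro h; nlinarith [hppp, hp']
  rw [div_eq_div_iff hd1 hd2]
  ring
end

section
/- The irregular square-cell configuration ISC(p, q, m, n) has exactly (2n² − p² − q² + 4mn + 8m + 4n)/4 vertices and (2n² − p² − q² + 4mn + 4m + p + q − 2)/2 edges. -/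
/-- The irregular square-cell configuration `ISC(p,q,m,n)` as a region of the
integer square lattice: with `Y₁ = (n−p)/2`, the lower trapezium consists of
rows `y = 0, …, Y₁` equal to `[-y, p+y]`, the middle parallelogram of rows
`y = Y₁+1, …, Y₁+m−1` equal to `[-y, n+1-y]`, and the upper inverted trapezium
of rows `y = Y₁+m, …, Y₁+m+(n−q)/2` equal to
`[-Y₁-m+1+j, -Y₁-m+1+n-j]` where `j = y-Y₁-m`. -/
noncomputable def ISCregion (p q m n : ℤ) : Finset (ℤ × ℤ) :=
  (Finset.Icc (-(n + m)) (n + m) ×ˢ Finset.Icc (-(n + m)) (n + m)).filter fun z =>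
    (0 ≤ z.2 ∧ z.2 ≤ (n - p) / 2 ∧ -z.2 ≤ z.1 ∧ z.1 ≤ p + z.2) ∨
    ((n - p) / 2 + 1 ≤ z.2 ∧ z.2 ≤ (n - p) / 2 + m - 1 ∧
      -z.2 ≤ z.1 ∧ z.1 ≤ n + 1 - z.2) ∨
    ((n - p) / 2 + m ≤ z.2 ∧ z.2 ≤ (n - p) / 2 + m + (n - q) / 2 ∧
      -((n - p) / 2) - m + 1 + (z.2 - ((n - p) / 2 + m)) ≤ z.1 ∧
      z.1 ≤ -((n - p) / 2) - m + 1 + n - (z.2 - ((n - p) / 2 + m)))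

/-- The graph of `ISC(p,q,m,n)`: its vertices are the lattice points of the
region, adjacent when at L¹ distance 1. -/
def ISCgraph (p q m n : ℤ) : SimpleGraph ↥(ISCregion p q m n) where
  Adj u v := |u.1.1 - v.1.1| + |u.1.2 - v.1.2| = 1
  symm := ⟨fun u v h => by simpa [abs_sub_comm] using h⟩
  loopless := ⟨fun u h => by simp at h⟩

instance (p q m n : ℤ) : DecidableRel (ISCgraph p q m n).Adj :=
  fun u v => decidable_of_iff (|u.1.1 - v.1.1| + |u.1.2 - v.1.2| = 1) Iff.rfl

/- ### auxiliary lemmas -/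

lemma ISC.abs4 (x y : ℤ) : |x| + |y| = 1 ↔
    (x = 1 ∧ y = 0) ∨ (x = -1 ∧ y = 0) ∨ (x = 0 ∧ y = 1) ∨ (x = 0 ∧ y = -1) := by
  rcases abs_cases x with ⟨h1, _⟩ | ⟨h1, _⟩ <;> rcases abs_cases y with ⟨h2, _⟩ | ⟨h2, _⟩ <;> omega

lemma ISC.sum_linear (c d u : ℤ) : ∀ v, u ≤ v →
    2 * ∑ x ∈ Finset.Ico u v, (c + d * x) = (v - u) * (2 * c + d * (u + v - 1)) := by
  refine Int.le_induction ?_ ?_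
  · simp
  · intro v hv ih
    have h1 : Finset.Ico u (v + 1) = insert v (Finset.Ico u v) := by
      ext x; simp [Finset.mem_Ico, Finset.mem_insert]; omega
    have h2 : v ∉ Finset.Ico u v := by simp
    rw [h1, Finset.sum_insert h2, mul_add, ih]; ring

lemma ISC.card_rowset (S : Finset (ℤ × ℤ)) (N : ℤ) (f g : ℤ → ℤ)
    (hmem : ∀ x y : ℤ, (x, y) ∈ S ↔ 0 ≤ y ∧ y ≤ N ∧ f y ≤ x ∧ x ≤ g y)
    (hfg : ∀ y, 0 ≤ y → y ≤ N → f y ≤ g y + 1) :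
    (S.card : ℤ) = ∑ y ∈ Finset.Icc 0 N, (g y - f y + 1) := by
  have hS : S = (Finset.Icc 0 N).biUnion
      (fun y => (Finset.Icc (f y) (g y)).map
        ⟨fun x => (x, y), fun _ _ h => by simpa using congrArg Prod.fst h⟩) := by
    ext ⟨x, y⟩
    simp only [hmem, Finset.mem_biUnion, Finset.mem_map, Finset.mem_Icc,
      Function.Embedding.coeFn_mk, Prod.mk.injEq]
    show _ ↔ ∃ a, (0 ≤ a ∧ a ≤ N) ∧ ∃ a_1, (f a ≤ a_1 ∧ a_1 ≤ g a) ∧ (a_1, a) = (x, y)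
    simp only [Prod.mk.injEq]
    constructor
    · rintro ⟨h0, h1, h2, h3⟩; exact ⟨y, ⟨h0, h1⟩, x, ⟨h2, h3⟩, rfl, rfl⟩
    · rintro ⟨y', ⟨h0, h1⟩, x', ⟨h2, h3⟩, rfl, rfl⟩; exact ⟨h0, h1, h2, h3⟩
  have hdisj : ∀ y₁ ∈ Finset.Icc 0 N, ∀ y₂ ∈ Finset.Icc 0 N, y₁ ≠ y₂ →
      Disjoint ((Finset.Icc (f y₁) (g y₁)).map
        ⟨fun x => (x, y₁), fun _ _ h => by simpa using congrArg Prod.fst h⟩)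
        ((Finset.Icc (f y₂) (g y₂)).map
        ⟨fun x => (x, y₂), fun _ _ h => by simpa using congrArg Prod.fst h⟩) := by
    intro y₁ _ y₂ _ hne
    simp only [Finset.disjoint_left, Finset.mem_map, Function.Embedding.coeFn_mk]
    rintro _ ⟨x, _, rfl⟩ ⟨x', _, h⟩
    exact hne (congrArg Prod.snd h).symm
  rw [hS, Finset.card_biUnion hdisj]
  push_cast
  refine Finset.sum_congr rfl fun y hy => ?_
  rw [Finset.card_map, Int.card_Icc]
  rw [Finset.mem_Icc] at hy
  have := hfg y hy.1 hy.2
  omega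

lemma ISC.mem (p q m n a b : ℤ) (hp : 1 ≤ p) (hpq : p ≤ q) (hqn : q ≤ n) (hm : 1 ≤ m)
    (ha : n - p = 2 * a) (hb : n - q = 2 * b) (x y : ℤ) :
    (x, y) ∈ ISCregion p q m n ↔
      0 ≤ y ∧ y ≤ a + m + b ∧
        max (-y) (y - 2 * (a + m) + 1) ≤ x ∧ x ≤ min (p + y) (n + 1 - y) := by
  have h1 : (n - p) / 2 = a := by omega
  have h2 : (n - q) / 2 = b := by omega
  simp only [ISCregion, Finset.mem_filter, Finset.mem_product, Finset.mem_Icc, h1, h2]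
  omega

lemma ISC.degree_eq (p q m n : ℤ) (v : ↥(ISCregion p q m n)) :
    (ISCgraph p q m n).degree v =
      (if (v.1.1 + 1, v.1.2) ∈ ISCregion p q m n then 1 else 0)
      + (if (v.1.1 - 1, v.1.2) ∈ ISCregion p q m n then 1 else 0)
      + (if (v.1.1, v.1.2 + 1) ∈ ISCregion p q m n then 1 else 0)
      + (if (v.1.1, v.1.2 - 1) ∈ ISCregion p q m n then 1 else 0) := by
  have h0 : (ISCgraph p q m n).degree v =
      ((ISCregion p q m n).filter fun w => |v.1.1 - w.1| + |v.1.2 - w.2| = 1).card := by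
    rw [SimpleGraph.degree, SimpleGraph.neighborFinset_eq_filter, Finset.univ_eq_attach,
      Finset.card_filter, Finset.card_filter,
      ← Finset.sum_attach (ISCregion p q m n)
        (fun z => if |v.1.1 - z.1| + |v.1.2 - z.2| = 1 then 1 else 0)]
    exact Finset.sum_congr rfl fun w _ => if_congr Iff.rfl rfl rfl
  rw [h0, Finset.card_filter]
  have key : ∀ w ∈ ISCregion p q m n,
      (if |v.1.1 - w.1| + |v.1.2 - w.2| = 1 then 1 else 0) =
      ((if w = (v.1.1 + 1, v.1.2) then 1 else 0) + (if w = (v.1.1 - 1, v.1.2) then 1 else 0)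
      + (if w = (v.1.1, v.1.2 + 1) then 1 else 0)
      + (if w = (v.1.1, v.1.2 - 1) then 1 else 0)) := by
    intro w _
    have h := ISC.abs4 (v.1.1 - w.1) (v.1.2 - w.2)
    have h2 : ∀ u u' : ℤ, w = (u, u') ↔ w.1 = u ∧ w.2 = u' := fun u u' => Prod.ext_iff
    simp only [h2]
    split_ifs <;> omega
  rw [Finset.sum_congr rfl key]
  simp [Finset.sum_add_distrib, Finset.sum_ite_eq']

lemma ISC.sum_deg (p q m n : ℤ) :
    ∑ v : ↥(ISCregion p q m n), (ISCgraph p q m n).degree v =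
      2 * ((ISCregion p q m n).filter fun z => (z.1 + 1, z.2) ∈ ISCregion p q m n).card
      + 2 * ((ISCregion p q m n).filter fun z => (z.1, z.2 + 1) ∈ ISCregion p q m n).card := by
  set s := ISCregion p q m n with hs
  have h1 : ∑ v : ↥s, (ISCgraph p q m n).degree v =
      ∑ z ∈ s, ((if (z.1 + 1, z.2) ∈ s then 1 else 0)
        + (if (z.1 - 1, z.2) ∈ s then 1 else 0)
        + (if (z.1, z.2 + 1) ∈ s then 1 else 0)
        + (if (z.1, z.2 - 1) ∈ s then 1 else 0)) := by
    rw [Finset.univ_eq_attach,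
      ← Finset.sum_attach s (fun z => (if (z.1 + 1, z.2) ∈ s then 1 else 0)
        + (if (z.1 - 1, z.2) ∈ s then 1 else 0)
        + (if (z.1, z.2 + 1) ∈ s then 1 else 0)
        + (if (z.1, z.2 - 1) ∈ s then 1 else 0))]
    exact Finset.sum_congr rfl fun v _ => ISC.degree_eq p q m n v
  -- reflection: count of z with z-e ∈ s equals count of z with z+e ∈ s
  have hx : (s.filter fun z => (z.1 - 1, z.2) ∈ s).card
      = (s.filter fun z => (z.1 + 1, z.2) ∈ s).card := by
    refine Finset.card_bij' (fun z _ => (z.1 - 1, z.2)) (fun z _ => (z.1 + 1, z.2)) ?_ ?_ ?_ ?_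
    · intro z hz
      rw [Finset.mem_filter] at hz ⊢
      refine ⟨hz.2, ?_⟩
      have : (z.1 - 1 + 1, z.2) = z := by simp
      rw [this]; exact hz.1
    · intro z hz
      rw [Finset.mem_filter] at hz ⊢
      refine ⟨hz.2, ?_⟩
      have : (z.1 + 1 - 1, z.2) = z := by simp
      rw [this]; exact hz.1
    · intro z _; simp
    · intro z _; simp
  have hy : (s.filter fun z => (z.1, z.2 - 1) ∈ s).card
      = (s.filter fun z => (z.1, z.2 + 1) ∈ s).card := by
    refine Finset.card_bij' (fun z _ => (z.1, z.2 - 1)) (fun z _ => (z.1, z.2 + 1)) ?_ ?_ ?_ ?_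
    · intro z hz
      rw [Finset.mem_filter] at hz ⊢
      refine ⟨hz.2, ?_⟩
      have : (z.1, z.2 - 1 + 1) = z := by simp
      rw [this]; exact hz.1
    · intro z hz
      rw [Finset.mem_filter] at hz ⊢
      refine ⟨hz.2, ?_⟩
      have : (z.1, z.2 + 1 - 1) = z := by simp
      rw [this]; exact hz.1
    · intro z _; simp
    · intro z _; simp
  rw [h1]
  rw [Finset.sum_add_distrib, Finset.sum_add_distrib, Finset.sum_add_distrib]
  rw [← Finset.card_filter, ← Finset.card_filter, ← Finset.card_filter, ← Finset.card_filter]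
  rw [hx, hy]
  ring

lemma ISC.sum_split (f : ℤ → ℤ) {u v w : ℤ} (h1 : u ≤ v) (h2 : v ≤ w) :
    ∑ x ∈ Finset.Ico u w, f x
      = ∑ x ∈ Finset.Ico u v, f x + ∑ x ∈ Finset.Ico v w, f x := by
  rw [← Finset.sum_union (Finset.Ico_disjoint_Ico_consecutive u v w),
    Finset.Ico_union_Ico_eq_Ico h1 h2]


/-- `ISC(p,q,m,n)` has exactly `(2n² − p² − q² + 4mn + 8m + 4n)/4` vertices and
`(2n² − p² − q² + 4mn + 4m + p + q − 2)/2` edges. -/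
theorem ISC_card_vertices_edges (p q m n : ℤ) (hp : 1 ≤ p) (hpq : p ≤ q)
    (hqn : q ≤ n) (hm : 1 ≤ m) (hpar₁ : (n - p) % 2 = 0) (hpar₂ : (n - q) % 2 = 0) :
    4 * ((ISCregion p q m n).card : ℤ) =
        2 * n ^ 2 - p ^ 2 - q ^ 2 + 4 * m * n + 8 * m + 4 * n ∧
    2 * ((ISCgraph p q m n).edgeFinset.card : ℤ) =
        2 * n ^ 2 - p ^ 2 - q ^ 2 + 4 * m * n + 4 * m + p + q - 2 := by
  obtain ⟨a, ha⟩ : ∃ a, n - p = 2 * a := ⟨(n - p) / 2, by omega⟩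
  obtain ⟨b, hb⟩ : ∃ b, n - q = 2 * b := ⟨(n - q) / 2, by omega⟩
  have ha0 : 0 ≤ a := by omega
  have hb0 : 0 ≤ b := by omega
  have hmem := ISC.mem p q m n a b hp hpq hqn hm ha hb
  have hIco : ∀ N : ℤ, Finset.Icc (0:ℤ) N = Finset.Ico 0 (N + 1) := by
    intro N; ext x; simp only [Finset.mem_Icc, Finset.mem_Ico]; omega
  constructor
  · -- vertex count
    have hVc : ((ISCregion p q m n).card : ℤ) = ∑ y ∈ Finset.Icc 0 (a + m + b),
        (min (p + y) (n + 1 - y) - max (-y) (y - 2 * (a + m) + 1) + 1) :=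
      ISC.card_rowset (ISCregion p q m n) (a + m + b)
        (fun y => max (-y) (y - 2 * (a + m) + 1)) (fun y => min (p + y) (n + 1 - y))
        (fun x y => hmem x y) (fun y h1 h2 => by omega)
    rw [hVc, hIco,
      ISC.sum_split _ (by omega : (0:ℤ) ≤ a + 1) (by omega : a + 1 ≤ a + m + b + 1),
      ISC.sum_split _ (by omega : (a + 1 : ℤ) ≤ a + m) (by omega : a + m ≤ a + m + b + 1)]
    have p1 : ∑ y ∈ Finset.Ico (0:ℤ) (a+1),
        (min (p + y) (n + 1 - y) - max (-y) (y - 2 * (a + m) + 1) + 1)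
        = ∑ y ∈ Finset.Ico (0:ℤ) (a+1), ((p + 1) + 2 * y) :=
      Finset.sum_congr rfl fun y hy => by rw [Finset.mem_Ico] at hy; omega
    have p2 : ∑ y ∈ Finset.Ico (a+1) (a+m),
        (min (p + y) (n + 1 - y) - max (-y) (y - 2 * (a + m) + 1) + 1)
        = ∑ y ∈ Finset.Ico (a+1) (a+m), ((n + 2) + 0 * y) :=
      Finset.sum_congr rfl fun y hy => by rw [Finset.mem_Ico] at hy; omega
    have p3 : ∑ y ∈ Finset.Ico (a+m) (a+m+b+1),
        (min (p + y) (n + 1 - y) - max (-y) (y - 2 * (a + m) + 1) + 1)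
        = ∑ y ∈ Finset.Ico (a+m) (a+m+b+1), ((n + 1 + 2 * (a + m)) + (-2) * y) :=
      Finset.sum_congr rfl fun y hy => by rw [Finset.mem_Ico] at hy; omega
    rw [p1, p2, p3]
    have e1 := ISC.sum_linear (p+1) 2 0 (a+1) (by omega)
    have e2 := ISC.sum_linear (n+2) 0 (a+1) (a+m) (by omega)
    have e3 := ISC.sum_linear (n+1+2*(a+m)) (-2) (a+m) (a+m+b+1) (by omega)
    linear_combination 2*e1 + 2*e2 + 2*e3 - (n + p + 2*a + 4)*ha - (n + q - 2*b)*hb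
  · -- edge count
    have h2E := SimpleGraph.sum_degrees_eq_twice_card_edges (ISCgraph p q m n)
    have hsum := ISC.sum_deg p q m n
    have hE : 2 * ((ISCgraph p q m n).edgeFinset.card : ℤ)
        = 2 * (((ISCregion p q m n).filter
            fun z => (z.1 + 1, z.2) ∈ ISCregion p q m n).card : ℤ)
        + 2 * (((ISCregion p q m n).filter
            fun z => (z.1, z.2 + 1) ∈ ISCregion p q m n).card : ℤ) := by
      have h := congrArg (Nat.cast (R := ℤ)) (h2E.symm.trans hsum)
      push_cast at h
      linarith
    rw [hE]
    have hHc : ((((ISCregion p q m n).filter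
          fun z => (z.1 + 1, z.2) ∈ ISCregion p q m n)).card : ℤ)
        = ∑ y ∈ Finset.Icc 0 (a + m + b),
          (min (p + y) (n + 1 - y) - 1 - max (-y) (y - 2 * (a + m) + 1) + 1) :=
      ISC.card_rowset _ (a + m + b)
        (fun y => max (-y) (y - 2 * (a + m) + 1)) (fun y => min (p + y) (n + 1 - y) - 1)
        (fun x y => by
          simp only [Finset.mem_filter, hmem]
          omega)
        (fun y h1 h2 => by omega)
    have hVc : ((((ISCregion p q m n).filter
          fun z => (z.1, z.2 + 1) ∈ ISCregion p q m n)).card : ℤ)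
        = ∑ y ∈ Finset.Icc 0 (a + m + b - 1),
          (min (min (p + y) (n + 1 - y)) (min (p + (y+1)) (n + 1 - (y+1)))
            - max (max (-y) (y - 2 * (a + m) + 1))
              (max (-(y+1)) ((y+1) - 2 * (a + m) + 1)) + 1) :=
      ISC.card_rowset _ (a + m + b - 1)
        (fun y => max (max (-y) (y - 2 * (a + m) + 1))
          (max (-(y+1)) ((y+1) - 2 * (a + m) + 1)))
        (fun y => min (min (p + y) (n + 1 - y)) (min (p + (y+1)) (n + 1 - (y+1))))
        (fun x y => by
          simp only [Finset.mem_filter, hmem]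
          omega)
        (fun y h1 h2 => by omega)
    rw [hHc, hVc, hIco, hIco]
    rw [ISC.sum_split
        (fun y => min (p + y) (n + 1 - y) - 1 - max (-y) (y - 2 * (a + m) + 1) + 1)
        (by omega : (0:ℤ) ≤ a + 1) (by omega : a + 1 ≤ a + m + b + 1),
      ISC.sum_split
        (fun y => min (p + y) (n + 1 - y) - 1 - max (-y) (y - 2 * (a + m) + 1) + 1)
        (by omega : (a + 1 : ℤ) ≤ a + m) (by omega : a + m ≤ a + m + b + 1)]
    have hT : a + m + b - 1 + 1 = a + m + b := by ring
    rw [hT]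
    rw [ISC.sum_split
        (fun y => min (min (p + y) (n + 1 - y)) (min (p + (y+1)) (n + 1 - (y+1)))
          - max (max (-y) (y - 2 * (a + m) + 1))
            (max (-(y+1)) ((y+1) - 2 * (a + m) + 1)) + 1)
        (by omega : (0:ℤ) ≤ a) (by omega : a ≤ a + m + b),
      ISC.sum_split
        (fun y => min (min (p + y) (n + 1 - y)) (min (p + (y+1)) (n + 1 - (y+1)))
          - max (max (-y) (y - 2 * (a + m) + 1))
            (max (-(y+1)) ((y+1) - 2 * (a + m) + 1)) + 1)
        (by omega : (a:ℤ) ≤ a + m) (by omega : a + m ≤ a + m + b)]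
    have q1 : ∑ y ∈ Finset.Ico (0:ℤ) (a+1),
        (min (p + y) (n + 1 - y) - 1 - max (-y) (y - 2 * (a + m) + 1) + 1)
        = ∑ y ∈ Finset.Ico (0:ℤ) (a+1), (p + 2 * y) :=
      Finset.sum_congr rfl fun y hy => by rw [Finset.mem_Ico] at hy; omega
    have q2 : ∑ y ∈ Finset.Ico (a+1) (a+m),
        (min (p + y) (n + 1 - y) - 1 - max (-y) (y - 2 * (a + m) + 1) + 1)
        = ∑ y ∈ Finset.Ico (a+1) (a+m), ((n + 1) + 0 * y) :=
      Finset.sum_congr rfl fun y hy => by rw [Finset.mem_Ico] at hy; omega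
    have q3 : ∑ y ∈ Finset.Ico (a+m) (a+m+b+1),
        (min (p + y) (n + 1 - y) - 1 - max (-y) (y - 2 * (a + m) + 1) + 1)
        = ∑ y ∈ Finset.Ico (a+m) (a+m+b+1), ((n + 2 * (a + m)) + (-2) * y) :=
      Finset.sum_congr rfl fun y hy => by rw [Finset.mem_Ico] at hy; omega
    have r1 : ∑ y ∈ Finset.Ico (0:ℤ) a,
        (min (min (p + y) (n + 1 - y)) (min (p + (y+1)) (n + 1 - (y+1)))
          - max (max (-y) (y - 2 * (a + m) + 1))
            (max (-(y+1)) ((y+1) - 2 * (a + m) + 1)) + 1)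
        = ∑ y ∈ Finset.Ico (0:ℤ) a, ((p + 1) + 2 * y) :=
      Finset.sum_congr rfl fun y hy => by rw [Finset.mem_Ico] at hy; omega
    have r2 : ∑ y ∈ Finset.Ico a (a+m),
        (min (min (p + y) (n + 1 - y)) (min (p + (y+1)) (n + 1 - (y+1)))
          - max (max (-y) (y - 2 * (a + m) + 1))
            (max (-(y+1)) ((y+1) - 2 * (a + m) + 1)) + 1)
        = ∑ y ∈ Finset.Ico a (a+m), ((n + 1) + 0 * y) :=
      Finset.sum_congr rfl fun y hy => by rw [Finset.mem_Ico] at hy; omega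
    have r3 : ∑ y ∈ Finset.Ico (a+m) (a+m+b),
        (min (min (p + y) (n + 1 - y)) (min (p + (y+1)) (n + 1 - (y+1)))
          - max (max (-y) (y - 2 * (a + m) + 1))
            (max (-(y+1)) ((y+1) - 2 * (a + m) + 1)) + 1)
        = ∑ y ∈ Finset.Ico (a+m) (a+m+b), ((n - 1 + 2 * (a + m)) + (-2) * y) :=
      Finset.sum_congr rfl fun y hy => by rw [Finset.mem_Ico] at hy; omega
    rw [q1, q2, q3, r1, r2, r3]
    have e1 := ISC.sum_linear p 2 0 (a+1) (by omega)
    have e2 := ISC.sum_linear (n+1) 0 (a+1) (a+m) (by omega)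
    have e3 := ISC.sum_linear (n + 2*(a+m)) (-2) (a+m) (a+m+b+1) (by omega)
    have f1 := ISC.sum_linear (p+1) 2 0 a (by omega)
    have f2 := ISC.sum_linear (n+1) 0 a (a+m) (by omega)
    have f3 := ISC.sum_linear (n - 1 + 2*(a+m)) (-2) (a+m) (a+m+b) (by omega)
    linear_combination e1 + e2 + e3 + f1 + f2 + f3
      - (n + p + 2*a + 1)*ha - (n + q - 2*b - 1)*hb
end

section
/- For the trapezium square-cell configuration T(n,p) with n, p ≥ 1 of the same parity, the Wiener index equals (1/960)·(11n⁵ + 220n⁴ − 30n³p² + 1400n³ + n²(20p³ − 360p² − 20p + 3440) + n(−5p⁴ + 160p³ − 880p² − 160p + 3344) + 4p⁵ − 20p⁴ + 140p³ − 400p² − 144p + 960). -/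
/-- The trapezium square-cell configuration `T(n,p)` as a region of the integer
square lattice: with `Y₁ = (n−p)/2`, rows `y = 0, …, Y₁` are `[-y, p+y]` (widths
`p+1, p+3, …, n+1` from bottom edge of length `p` widening to `n`), plus the
top row `y = Y₁+1` equal to `[-Y₁, p+Y₁]`. -/
noncomputable def trapRegion (n p : ℤ) : Finset (ℤ × ℤ) :=
  (Finset.Icc (-n) n ×ˢ Finset.Icc (-n) n).filter fun z =>
    (0 ≤ z.2 ∧ z.2 ≤ (n - p) / 2 ∧ -z.2 ≤ z.1 ∧ z.1 ≤ p + z.2) ∨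
    (z.2 = (n - p) / 2 + 1 ∧ -((n - p) / 2) ≤ z.1 ∧ z.1 ≤ p + (n - p) / 2)

open Finset


lemma wtSumTele (a b : ℤ) (h : a - 1 ≤ b) (f : ℤ → ℚ) (F : ℚ → ℚ)
    (hstep : ∀ t : ℤ, a ≤ t → t ≤ b → F (t : ℚ) - F ((t : ℚ) - 1) = f t) :
    (∑ x ∈ Finset.Icc a b, f x) = F (b : ℚ) - F ((a : ℚ) - 1) := by
  obtain ⟨k, hk⟩ : ∃ k : ℕ, b = a - 1 + k := ⟨(b - (a - 1)).toNat, by omega⟩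
  subst hk
  clear h
  revert hstep
  induction k with
  | zero =>
    intro _
    rw [Finset.Icc_eq_empty (by omega)]
    rw [show (((a - 1 + ((0 : ℕ) : ℤ)) : ℤ) : ℚ) = (a : ℚ) - 1 from by push_cast; ring]
    simp
  | succ k ih =>
    intro hstep
    rw [show Finset.Icc a (a - 1 + ((k + 1 : ℕ) : ℤ)) =
          insert (a + k) (Finset.Icc a (a - 1 + (k : ℤ))) from by
          ext t; simp only [Finset.mem_Icc, Finset.mem_insert]; omega,
        Finset.sum_insert (by simp only [Finset.mem_Icc]; omega),
        ih (fun t h1 h2 => hstep t h1 (by omega))]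
    have h3 := hstep (a + k) (by omega) (by omega)
    push_cast at h3 ⊢
    ring_nf at h3 ⊢
    linarith

lemma wtSumAbs (c d x : ℤ) (h1 : c ≤ x) (h2 : x ≤ d) :
    (∑ t ∈ Finset.Icc c d, |(x : ℚ) - (t : ℚ)|) =
      (((x : ℚ) - c) * ((x : ℚ) - c + 1) + ((d : ℚ) - x) * ((d : ℚ) - x + 1)) / 2 := by
  have hsplit : Finset.Icc c d = Finset.Icc c x ∪ Finset.Icc (x + 1) d := by
    ext t; simp only [Finset.mem_Icc, Finset.mem_union]; omega
  have hdisj : Disjoint (Finset.Icc c x) (Finset.Icc (x + 1) d) := by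
    simp only [Finset.disjoint_left, Finset.mem_Icc]
    intro t ht1 ht2; omega
  rw [hsplit, Finset.sum_union hdisj]
  have e1 : (∑ t ∈ Finset.Icc c x, |(x : ℚ) - (t : ℚ)|) =
      (fun s : ℚ => (x : ℚ) * s - s * (s + 1) / 2) (x : ℚ) -
      (fun s : ℚ => (x : ℚ) * s - s * (s + 1) / 2) ((c : ℚ) - 1) :=
    wtSumTele c x (by omega) (fun t => |(x : ℚ) - (t : ℚ)|)
      (fun s : ℚ => (x : ℚ) * s - s * (s + 1) / 2)
      (by intro t ht1 ht2
          rw [abs_of_nonneg (by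
            have h7 : (t : ℚ) ≤ (x : ℚ) := by exact_mod_cast ht2
            linarith)]
          ring)
  have e2 : (∑ t ∈ Finset.Icc (x + 1) d, |(x : ℚ) - (t : ℚ)|) =
      (fun s : ℚ => s * (s + 1) / 2 - (x : ℚ) * s) (d : ℚ) -
      (fun s : ℚ => s * (s + 1) / 2 - (x : ℚ) * s) (((x + 1 : ℤ) : ℚ) - 1) :=
    wtSumTele (x + 1) d (by omega) (fun t => |(x : ℚ) - (t : ℚ)|)
      (fun s : ℚ => s * (s + 1) / 2 - (x : ℚ) * s)
      (by intro t ht1 ht2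
          rw [abs_sub_comm, abs_of_nonneg (by
            have h7 : ((x : ℚ) + 1) ≤ (t : ℚ) := by exact_mod_cast ht1
            linarith)]
          ring)
  rw [e1, e2]
  dsimp only
  push_cast
  ring

lemma wtPairSum (p u1 u2 : ℤ) (q : ℚ) (h0 : 0 ≤ u1) (h12 : u1 ≤ u2) (hp : 1 ≤ p) :
    (∑ x1 ∈ Finset.Icc (-u1) (p + u1), ∑ x2 ∈ Finset.Icc (-u2) (p + u2),
        (|(x1 : ℚ) - (x2 : ℚ)| + q)) =
      (1 : ℚ) * (u2:ℚ) + (1 : ℚ) * (u2:ℚ)^2 + (1/3 : ℚ) * (u1:ℚ) + (2 : ℚ) * (u1:ℚ) * (u2:ℚ) + (2 : ℚ) * (u1:ℚ) * (u2:ℚ)^2 + (1 : ℚ) * (u1:ℚ)^2 + (2/3 : ℚ) * (u1:ℚ)^3 + (2/3 : ℚ) * (p:ℚ) + (2 : ℚ) * (p:ℚ) * (u2:ℚ) + (1 : ℚ) * (p:ℚ) * (u2:ℚ)^2 + (2 : ℚ) * (p:ℚ) * (u1:ℚ) + (2 : ℚ) * (p:ℚ) * (u1:ℚ) * (u2:ℚ)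 + (1 : ℚ) * (p:ℚ) * (u1:ℚ)^2 + (1 : ℚ) * (p:ℚ)^2 + (1 : ℚ) * (p:ℚ)^2 * (u2:ℚ) + (1 : ℚ) * (p:ℚ)^2 * (u1:ℚ) + (1/3 : ℚ) * (p:ℚ)^3 + ((p:ℚ) + 2 * (u1:ℚ) + 1) * ((p:ℚ) + 2 * (u2:ℚ) + 1) * q := by
  have hstep : ∀ t : ℤ, -u1 ≤ t → t ≤ p + u1 →
      (fun t : ℚ => (1/6 : ℚ) * t + (1 : ℚ) * t * q + (1 : ℚ) * t * (u2:ℚ) + (2 : ℚ) * t * (u2:ℚ) * q + (1 : ℚ) * t * (u2:ℚ)^2 + (1/2 : ℚ) * t^2 + (1/3 : ℚ) * t^3 + (1 : ℚ) * (p:ℚ) * t * q + (1 : ℚ) * (p:ℚ) * t * (u2:ℚ) + (-1/2 : ℚ) * (p:ℚ) * t^2 + (1/2 : ℚ) * (p:ℚ)^2 * t) (t : ℚ) - (fun t : ℚ => (1/6 : ℚ) * t + (1 : ℚ) * t * q + (1 : ℚ) * t * (u2:ℚ) + (2 : ℚ) * t * (u2:ℚ) * q + (1 : ℚ) * t * (u2:ℚ)^2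 + (1/2 : ℚ) * t^2 + (1/3 : ℚ) * t^3 + (1 : ℚ) * (p:ℚ) * t * q + (1 : ℚ) * (p:ℚ) * t * (u2:ℚ) + (-1/2 : ℚ) * (p:ℚ) * t^2 + (1/2 : ℚ) * (p:ℚ)^2 * t) ((t : ℚ) - 1) =
        ∑ x2 ∈ Finset.Icc (-u2) (p + u2), (|(t : ℚ) - (x2 : ℚ)| + q) := by
    intro t ht1 ht2
    rw [Finset.sum_add_distrib, Finset.sum_const,
        wtSumAbs (-u2) (p + u2) t (by omega) (by omega), nsmul_eq_mul]
    have h6 : (((p + u2 + 1) - -u2).toNat : ℤ) = p + 2 * u2 + 1 := by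
      rw [Int.toNat_of_nonneg (by omega)]; ring
    have hcard : ((Finset.Icc (-u2) (p + u2)).card : ℚ) = (p : ℚ) + 2 * (u2 : ℚ) + 1 := by
      rw [Int.card_Icc]
      exact_mod_cast congrArg (fun z : ℤ => (z : ℚ)) h6
    rw [hcard]
    dsimp only
    push_cast
    ring
  rw [wtSumTele (-u1) (p + u1) (by omega)
      (fun x1 => ∑ x2 ∈ Finset.Icc (-u2) (p + u2), (|(x1 : ℚ) - (x2 : ℚ)| + q))
      (fun t : ℚ => (1/6 : ℚ) * t + (1 : ℚ) * t * q + (1 : ℚ) * t * (u2:ℚ) + (2 : ℚ) * t * (u2:ℚ) * q + (1 : ℚ) * t * (u2:ℚ)^2 + (1/2 : ℚ) * t^2 + (1/3 : ℚ) * t^3 + (1 : ℚ) * (p:ℚ) * t * q + (1 : ℚ) * (p:ℚ) * t * (u2:ℚ) + (-1/2 : ℚ) * (p:ℚ) * t^2 + (1/2 : ℚ) * (p:ℚ)^2 * t) (fun t ht1 ht2 => hstep t ht1 ht2)]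
  push_cast
  ring



noncomputable def wtRow (p m y : ℤ) : Finset ℤ := Finset.Icc (-(min y m)) (p + min y m)

noncomputable def wtWW (p m y1 y2 : ℤ) : ℚ :=
  ∑ x1 ∈ wtRow p m y1, ∑ x2 ∈ wtRow p m y2, (|(x1 : ℚ) - (x2 : ℚ)| + |(y1 : ℚ) - (y2 : ℚ)|)

lemma wtWW_comm (p m y1 y2 : ℤ) : wtWW p m y1 y2 = wtWW p m y2 y1 := by
  unfold wtWW
  rw [Finset.sum_comm]
  exact Finset.sum_congr rfl fun a _ => Finset.sum_congr rfl fun b _ => by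
    rw [abs_sub_comm ((b : ℚ)) ((a : ℚ)), abs_sub_comm ((y1 : ℚ)) ((y2 : ℚ))]

lemma wtRegionSum (p m : ℤ) (hp : 1 ≤ p) (hm : 0 ≤ m) (f : ℤ × ℤ → ℚ) :
    (∑ z ∈ trapRegion (p + 2 * m) p, f z) =
      ∑ y ∈ Finset.Icc 0 (m + 1), ∑ x ∈ wtRow p m y, f (x, y) := by
  have hreg : trapRegion (p + 2 * m) p =
      (Finset.Icc 0 (m + 1)).biUnion fun y => (wtRow p m y).image fun x => (x, y) := by
    ext z
    obtain ⟨x, y⟩ := z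
    simp only [trapRegion, wtRow, Finset.mem_filter, Finset.mem_product, Finset.mem_Icc,
      Finset.mem_biUnion, Finset.mem_image]
    constructor
    · rintro ⟨⟨⟨hx1, hx2⟩, hy1, hy2⟩, h | h⟩
      · exact ⟨y, ⟨by omega, by omega⟩, x, by omega, rfl⟩
      · exact ⟨y, ⟨by omega, by omega⟩, x, by omega, rfl⟩
    · rintro ⟨y', ⟨hy0, hy1⟩, x', hx', heq⟩
      injection heq with e1 e2
      subst e1
      subst e2
      refine ⟨⟨⟨by omega, by omega⟩, by omega, by omega⟩, ?_⟩
      omega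
  rw [hreg, Finset.sum_biUnion]
  · refine Finset.sum_congr rfl fun y _ => ?_
    exact Finset.sum_image fun a _ b _ hab => by simpa using hab
  · intro s _ t _ hst
    simp only [Finset.disjoint_left, Finset.mem_image]
    rintro z ⟨x1, _, rfl⟩ ⟨x2, _, heq⟩
    injection heq with e1 e2
    exact hst e2.symm

lemma wtMainSum (p m : ℤ) (hp : 1 ≤ p) (hm : 0 ≤ m) :
    (∑ u ∈ trapRegion (p + 2 * m) p, ∑ v ∈ trapRegion (p + 2 * m) p,
        ((|u.1 - v.1| + |u.2 - v.2| : ℤ) : ℚ)) =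
      ∑ y1 ∈ Finset.Icc 0 (m + 1), ∑ y2 ∈ Finset.Icc 0 (m + 1), wtWW p m y1 y2 := by
  have h0 : (∑ u ∈ trapRegion (p + 2 * m) p, ∑ v ∈ trapRegion (p + 2 * m) p,
        ((|u.1 - v.1| + |u.2 - v.2| : ℤ) : ℚ)) =
      ∑ y1 ∈ Finset.Icc 0 (m + 1), ∑ x1 ∈ wtRow p m y1,
        ∑ v ∈ trapRegion (p + 2 * m) p, ((|x1 - v.1| + |y1 - v.2| : ℤ) : ℚ) :=
    wtRegionSum p m hp hm
      (fun u => ∑ v ∈ trapRegion (p + 2 * m) p, ((|u.1 - v.1| + |u.2 - v.2| : ℤ) : ℚ))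
  rw [h0]
  refine Finset.sum_congr rfl fun y1 _ => ?_
  have h1 : ∀ x1 ∈ wtRow p m y1,
      (∑ v ∈ trapRegion (p + 2 * m) p, ((|x1 - v.1| + |y1 - v.2| : ℤ) : ℚ)) =
        ∑ y2 ∈ Finset.Icc 0 (m + 1), ∑ x2 ∈ wtRow p m y2,
          ((|x1 - x2| + |y1 - y2| : ℤ) : ℚ) := fun x1 _ =>
    wtRegionSum p m hp hm (fun v => ((|x1 - v.1| + |y1 - v.2| : ℤ) : ℚ))
  rw [Finset.sum_congr rfl h1, Finset.sum_comm]
  unfold wtWW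
  refine Finset.sum_congr rfl fun y2 _ => Finset.sum_congr rfl fun x1 _ =>
    Finset.sum_congr rfl fun x2 _ => ?_
  push_cast
  ring

/-- For `n, p ≥ 1` of the same parity (with `p ≤ n`), the Wiener index of the
trapezium square-cell configuration `T(n,p)` equals the stated quintic formula. -/
theorem wiener_trapezium (n p : ℤ) (hp : 1 ≤ p) (hpn : p ≤ n)
    (hpar : (n - p) % 2 = 0) :
    (∑ u ∈ trapRegion n p, ∑ v ∈ trapRegion n p,
        ((|u.1 - v.1| + |u.2 - v.2| : ℤ) : ℚ)) / 2 =
      (11 * (n : ℚ) ^ 5 + 220 * (n : ℚ) ^ 4 - 30 * (n : ℚ) ^ 3 * (p : ℚ) ^ 2 +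
        1400 * (n : ℚ) ^ 3 +
        (n : ℚ) ^ 2 * (20 * (p : ℚ) ^ 3 - 360 * (p : ℚ) ^ 2 - 20 * (p : ℚ) + 3440) +
        (n : ℚ) * (-5 * (p : ℚ) ^ 4 + 160 * (p : ℚ) ^ 3 - 880 * (p : ℚ) ^ 2 -
          160 * (p : ℚ) + 3344) +
        4 * (p : ℚ) ^ 5 - 20 * (p : ℚ) ^ 4 + 140 * (p : ℚ) ^ 3 - 400 * (p : ℚ) ^ 2 -
        144 * (p : ℚ) + 960) / 960 := by
  obtain ⟨m, rfl⟩ : ∃ m, n = p + 2 * m := ⟨(n - p) / 2, by omega⟩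
  have hm0 : (0 : ℤ) ≤ m := by omega
  have hnot : (m + 1) ∉ Finset.Icc 0 m := by simp only [Finset.mem_Icc]; omega
  have hins : Finset.Icc 0 (m + 1) = insert (m + 1) (Finset.Icc 0 m) := by
    ext t; simp only [Finset.mem_Icc, Finset.mem_insert]; omega
  have hT1 : wtWW p m (m + 1) (m + 1) = (4/3 : ℚ) * (m:ℚ) + (4 : ℚ) * (m:ℚ)^2 + (8/3 : ℚ) * (m:ℚ)^3 + (2/3 : ℚ) * (p:ℚ) + (4 : ℚ) * (p:ℚ) * (m:ℚ) + (4 : ℚ) * (p:ℚ) * (m:ℚ)^2 + (1 : ℚ) * (p:ℚ)^2 + (2 : ℚ) * (p:ℚ)^2 * (m:ℚ) + (1/3 : ℚ) * (p:ℚ)^3 := by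
    unfold wtWW wtRow
    rw [wtPairSum p (min (m + 1) m) (min (m + 1) m)
        (|((m + 1 : ℤ) : ℚ) - ((m + 1 : ℤ) : ℚ)|) (by omega) le_rfl hp,
      min_eq_right (by omega : m ≤ m + 1), sub_self, abs_zero]
    push_cast
    ring
  have hT2 : (∑ y2 ∈ Finset.Icc 0 m, wtWW p m (m + 1) y2) = (1 : ℚ) + (11/2 : ℚ) * (m:ℚ) + (29/3 : ℚ) * (m:ℚ)^2 + (7 : ℚ) * (m:ℚ)^3 + (11/6 : ℚ) * (m:ℚ)^4 + (8/3 : ℚ) * (p:ℚ) + (19/2 : ℚ) * (p:ℚ) * (m:ℚ) + (21/2 : ℚ) * (p:ℚ) * (m:ℚ)^2 + (11/3 : ℚ) * (p:ℚ) * (m:ℚ)^3 + (2 : ℚ) * (p:ℚ)^2 + (4 : ℚ) * (p:ℚ)^2 * (m:ℚ) + (2 : ℚ) * (p:ℚ)^2 * (m:ℚ)^2 + (1/3 : ℚ) * (p:ℚ)^3 + (1/3 : ℚ) * (p:ℚ)^3 * (m:ℚ) := by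
    have hc : ∀ y2 ∈ Finset.Icc 0 m, wtWW p m (m + 1) y2 = (1 : ℚ) + (4/3 : ℚ) * (y2:ℚ) + (-1 : ℚ) * (y2:ℚ)^2 + (2/3 : ℚ) * (y2:ℚ)^3 + (4 : ℚ) * (m:ℚ) + (6 : ℚ) * (m:ℚ) * (y2:ℚ) + (-4 : ℚ) * (m:ℚ) * (y2:ℚ)^2 + (3 : ℚ) * (m:ℚ)^2 + (6 : ℚ) * (m:ℚ)^2 * (y2:ℚ) + (8/3 : ℚ) * (p:ℚ) + (2 : ℚ) * (p:ℚ) * (y2:ℚ) + (-1 : ℚ) * (p:ℚ) * (y2:ℚ)^2 + (6 : ℚ) * (p:ℚ) * (m:ℚ) + (2 : ℚ) * (p:ℚ) * (m:ℚ) * (y2:ℚ) + (3 : ℚ) * (p:ℚ) * (m:ℚ)^2 + (2 : ℚ) * (p:ℚ)^2 + (2 : ℚ) * (p:ℚ)^2 * (m:ℚ) + (1/3 : ℚ) * (p:ℚ)^3 := by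
      intro y2 hy2
      simp only [Finset.mem_Icc] at hy2
      rw [wtWW_comm]
      unfold wtWW wtRow
      rw [wtPairSum p (min y2 m) (min (m + 1) m)
          (|(y2 : ℚ) - ((m + 1 : ℤ) : ℚ)|) (by omega) (by omega) hp,
        min_eq_left (by omega : y2 ≤ m), min_eq_right (by omega : m ≤ m + 1),
        abs_sub_comm, abs_of_nonneg (by
          have h7 : (y2 : ℚ) ≤ ((m + 1 : ℤ) : ℚ) := by
            exact_mod_cast (by omega : y2 ≤ m + 1)
          linarith)]
      push_cast
      ring
    refine (Finset.sum_congr rfl hc).trans ?_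
    rw [wtSumTele 0 m (by omega) (fun y2 : ℤ => (1 : ℚ) + (4/3 : ℚ) * (y2:ℚ) + (-1 : ℚ) * (y2:ℚ)^2 + (2/3 : ℚ) * (y2:ℚ)^3 + (4 : ℚ) * (m:ℚ) + (6 : ℚ) * (m:ℚ) * (y2:ℚ) + (-4 : ℚ) * (m:ℚ) * (y2:ℚ)^2 + (3 : ℚ) * (m:ℚ)^2 + (6 : ℚ) * (m:ℚ)^2 * (y2:ℚ) + (8/3 : ℚ) * (p:ℚ) + (2 : ℚ) * (p:ℚ) * (y2:ℚ) + (-1 : ℚ) * (p:ℚ) * (y2:ℚ)^2 + (6 : ℚ) * (p:ℚ) * (m:ℚ) + (2 : ℚ) * (p:ℚ) * (m:ℚ) * (y2:ℚ) + (3 : ℚ) * (p:ℚ) * (m:ℚ)^2 + (2 : ℚ) * (p:ℚ)^2 + (2 : ℚ) * (p:ℚ)^2 * (m:ℚ) + (1/3 : ℚ) * (p:ℚ)^3) (fun t : ℚ => (3/2 : ℚ) * t + (1/3 : ℚ) * t^2 + (1/6 : ℚ) * t^4 + (19/3 : ℚ) * (m:ℚ) * t + (1 : ℚ) * (m:ℚ)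 * t^2 + (-4/3 : ℚ) * (m:ℚ) * t^3 + (6 : ℚ) * (m:ℚ)^2 * t + (3 : ℚ) * (m:ℚ)^2 * t^2 + (7/2 : ℚ) * (p:ℚ) * t + (1/2 : ℚ) * (p:ℚ) * t^2 + (-1/3 : ℚ) * (p:ℚ) * t^3 + (7 : ℚ) * (p:ℚ) * (m:ℚ) * t + (1 : ℚ) * (p:ℚ) * (m:ℚ) * t^2 + (3 : ℚ) * (p:ℚ) * (m:ℚ)^2 * t + (2 : ℚ) * (p:ℚ)^2 * t + (2 : ℚ) * (p:ℚ)^2 * (m:ℚ) * t + (1/3 : ℚ) * (p:ℚ)^3 * t)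
        (fun t h1 h2 => by push_cast; ring)]
    push_cast
    ring
  have hT3 : (∑ y1 ∈ Finset.Icc 0 m, wtWW p m y1 (m + 1)) = (1 : ℚ) + (11/2 : ℚ) * (m:ℚ) + (29/3 : ℚ) * (m:ℚ)^2 + (7 : ℚ) * (m:ℚ)^3 + (11/6 : ℚ) * (m:ℚ)^4 + (8/3 : ℚ) * (p:ℚ) + (19/2 : ℚ) * (p:ℚ) * (m:ℚ) + (21/2 : ℚ) * (p:ℚ) * (m:ℚ)^2 + (11/3 : ℚ) * (p:ℚ) * (m:ℚ)^3 + (2 : ℚ) * (p:ℚ)^2 + (4 : ℚ) * (p:ℚ)^2 * (m:ℚ) + (2 : ℚ) * (p:ℚ)^2 * (m:ℚ)^2 + (1/3 : ℚ) * (p:ℚ)^3 + (1/3 : ℚ) * (p:ℚ)^3 * (m:ℚ) := by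
    have hc : ∀ y1 ∈ Finset.Icc 0 m, wtWW p m y1 (m + 1) = (1 : ℚ) + (4/3 : ℚ) * (y1:ℚ) + (-1 : ℚ) * (y1:ℚ)^2 + (2/3 : ℚ) * (y1:ℚ)^3 + (4 : ℚ) * (m:ℚ) + (6 : ℚ) * (m:ℚ) * (y1:ℚ) + (-4 : ℚ) * (m:ℚ) * (y1:ℚ)^2 + (3 : ℚ) * (m:ℚ)^2 + (6 : ℚ) * (m:ℚ)^2 * (y1:ℚ) + (8/3 : ℚ) * (p:ℚ) + (2 : ℚ) * (p:ℚ) * (y1:ℚ) + (-1 : ℚ) * (p:ℚ) * (y1:ℚ)^2 + (6 : ℚ) * (p:ℚ) * (m:ℚ) + (2 : ℚ) * (p:ℚ) * (m:ℚ) * (y1:ℚ) + (3 : ℚ) * (p:ℚ) * (m:ℚ)^2 + (2 : ℚ) * (p:ℚ)^2 + (2 : ℚ) * (p:ℚ)^2 * (m:ℚ) + (1/3 : ℚ) * (p:ℚ)^3 := by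
      intro y1 hy1
      simp only [Finset.mem_Icc] at hy1
      unfold wtWW wtRow
      rw [wtPairSum p (min y1 m) (min (m + 1) m)
          (|(y1 : ℚ) - ((m + 1 : ℤ) : ℚ)|) (by omega) (by omega) hp,
        min_eq_left (by omega : y1 ≤ m), min_eq_right (by omega : m ≤ m + 1),
        abs_sub_comm, abs_of_nonneg (by
          have h7 : (y1 : ℚ) ≤ ((m + 1 : ℤ) : ℚ) := by
            exact_mod_cast (by omega : y1 ≤ m + 1)
          linarith)]
      push_cast
      ring
    refine (Finset.sum_congr rfl hc).trans ?_
    rw [wtSumTele 0 m (by omega) (fun y1 : ℤ => (1 : ℚ) + (4/3 : ℚ) * (y1:ℚ) + (-1 : ℚ) * (y1:ℚ)^2 + (2/3 : ℚ) * (y1:ℚ)^3 + (4 : ℚ) * (m:ℚ) + (6 : ℚ) * (m:ℚ) * (y1:ℚ) + (-4 : ℚ) * (m:ℚ) * (y1:ℚ)^2 + (3 : ℚ) * (m:ℚ)^2 + (6 : ℚ) * (m:ℚ)^2 * (y1:ℚ) + (8/3 : ℚ) * (p:ℚ) + (2 : ℚ) * (p:ℚ) * (y1:ℚ) + (-1 :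 ℚ) * (p:ℚ) * (y1:ℚ)^2 + (6 : ℚ) * (p:ℚ) * (m:ℚ) + (2 : ℚ) * (p:ℚ) * (m:ℚ) * (y1:ℚ) + (3 : ℚ) * (p:ℚ) * (m:ℚ)^2 + (2 : ℚ) * (p:ℚ)^2 + (2 : ℚ) * (p:ℚ)^2 * (m:ℚ) + (1/3 : ℚ) * (p:ℚ)^3) (fun t : ℚ => (3/2 : ℚ) * t + (1/3 : ℚ) * t^2 + (1/6 : ℚ) * t^4 + (19/3 : ℚ) * (m:ℚ) * t + (1 : ℚ) * (m:ℚ) * t^2 + (-4/3 : ℚ) * (m:ℚ) * t^3 + (6 : ℚ) * (m:ℚ)^2 * t + (3 : ℚ) * (m:ℚ)^2 * t^2 + (7/2 : ℚ) * (p:ℚ) * t + (1/2 : ℚ) * (p:ℚ) * t^2 + (-1/3 : ℚ) * (p:ℚ) * t^3 + (7 : ℚ) * (p:ℚ) * (m:ℚ) * t + (1 : ℚ) * (p:ℚ) * (m:ℚ) * t^2 + (3 : ℚ) * (p:ℚ) * (m:ℚ)^2 * t + (2 : ℚ) * (p:ℚ)^2 * t + (2 : ℚ) * (p:ℚ)^2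 * (m:ℚ) * t + (1/3 : ℚ) * (p:ℚ)^3 * t)
        (fun t h1 h2 => by push_cast; ring)]
    push_cast
    ring
  have hT4 : (∑ y1 ∈ Finset.Icc 0 m, ∑ y2 ∈ Finset.Icc 0 m, wtWW p m y1 y2) = (8/5 : ℚ) * (m:ℚ) + (16/3 : ℚ) * (m:ℚ)^2 + (20/3 : ℚ) * (m:ℚ)^3 + (11/3 : ℚ) * (m:ℚ)^4 + (11/15 : ℚ) * (m:ℚ)^5 + (2/3 : ℚ) * (p:ℚ) + (5 : ℚ) * (p:ℚ) * (m:ℚ) + (59/6 : ℚ) * (p:ℚ) * (m:ℚ)^2 + (22/3 : ℚ) * (p:ℚ) * (m:ℚ)^3 + (11/6 : ℚ) * (p:ℚ) * (m:ℚ)^4 + (1 : ℚ) * (p:ℚ)^2 + (11/3 : ℚ) * (p:ℚ)^2 * (m:ℚ) + (4 : ℚ) * (p:ℚ)^2 * (m:ℚ)^2 + (4/3 : ℚ) * (p:ℚ)^2 * (m:ℚ)^3 + (1/3 : ℚ) * (p:ℚ)^3 + (2/3 : ℚ) * (p:ℚ)^3 * (m:ℚ) + (1/3 : ℚ) * (p:ℚ)^3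 * (m:ℚ)^2 := by
    have hinner : ∀ y1 ∈ Finset.Icc 0 m,
        (∑ y2 ∈ Finset.Icc 0 m, wtWW p m y1 y2) = (5/6 : ℚ) * (y1:ℚ)^2 + (3 : ℚ) * (y1:ℚ)^3 + (7/6 : ℚ) * (y1:ℚ)^4 + (3/2 : ℚ) * (m:ℚ) + (4/3 : ℚ) * (m:ℚ) * (y1:ℚ) + (-3 : ℚ) * (m:ℚ) * (y1:ℚ)^2 + (2/3 : ℚ) * (m:ℚ) * (y1:ℚ)^3 + (5/2 : ℚ) * (m:ℚ)^2 + (4 : ℚ) * (m:ℚ)^2 * (y1:ℚ) + (-2 : ℚ) * (m:ℚ)^2 * (y1:ℚ)^2 + (1 : ℚ) * (m:ℚ)^3 + (2 : ℚ) * (m:ℚ)^3 * (y1:ℚ) + (2/3 : ℚ) * (p:ℚ) + (4/3 : ℚ) * (p:ℚ) * (y1:ℚ) + (3 : ℚ) * (p:ℚ) * (y1:ℚ)^2 + (8/3 : ℚ) * (p:ℚ) * (y1:ℚ)^3 + (19/6 : ℚ) * (p:ℚ) * (m:ℚ) + (1 : ℚ) * (p:ℚ) * (m:ℚ) * (y1:ℚ)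 + (-1 : ℚ) * (p:ℚ) * (m:ℚ) * (y1:ℚ)^2 + (7/2 : ℚ) * (p:ℚ) * (m:ℚ)^2 + (1 : ℚ) * (p:ℚ) * (m:ℚ)^2 * (y1:ℚ) + (1 : ℚ) * (p:ℚ) * (m:ℚ)^3 + (1 : ℚ) * (p:ℚ)^2 + (1 : ℚ) * (p:ℚ)^2 * (y1:ℚ) + (1 : ℚ) * (p:ℚ)^2 * (y1:ℚ)^2 + (2 : ℚ) * (p:ℚ)^2 * (m:ℚ) + (1 : ℚ) * (p:ℚ)^2 * (m:ℚ)^2 + (1/3 : ℚ) * (p:ℚ)^3 + (1/3 : ℚ) * (p:ℚ)^3 * (m:ℚ) := by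
      intro y1 hy1
      simp only [Finset.mem_Icc] at hy1
      have hsplit : Finset.Icc 0 m = Finset.Icc 0 y1 ∪ Finset.Icc (y1 + 1) m := by
        ext t; simp only [Finset.mem_Icc, Finset.mem_union]; omega
      have hdisj : Disjoint (Finset.Icc 0 y1) (Finset.Icc (y1 + 1) m) := by
        simp only [Finset.disjoint_left, Finset.mem_Icc]
        intro t ht1 ht2; omega
      have hlow : ∀ y2 ∈ Finset.Icc 0 y1, wtWW p m y1 y2 = (-2/3 : ℚ) * (y2:ℚ) + (-1 : ℚ) * (y2:ℚ)^2 + (2/3 : ℚ) * (y2:ℚ)^3 + (2 : ℚ) * (y1:ℚ) + (2 : ℚ) * (y1:ℚ) * (y2:ℚ) + (-4 : ℚ) * (y1:ℚ) * (y2:ℚ)^2 + (3 : ℚ) * (y1:ℚ)^2 + (6 : ℚ) * (y1:ℚ)^2 * (y2:ℚ) + (2/3 : ℚ) * (p:ℚ) + (-1 : ℚ) * (p:ℚ) * (y2:ℚ)^2 + (4 : ℚ) * (p:ℚ) * (y1:ℚ) + (2 : ℚ) * (p:ℚ) * (y1:ℚ) * (y2:ℚ) + (3 : ℚ) * (p:ℚ)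 * (y1:ℚ)^2 + (1 : ℚ) * (p:ℚ)^2 + (2 : ℚ) * (p:ℚ)^2 * (y1:ℚ) + (1/3 : ℚ) * (p:ℚ)^3 := by
        intro y2 hy2
        simp only [Finset.mem_Icc] at hy2
        rw [wtWW_comm]
        unfold wtWW wtRow
        rw [wtPairSum p (min y2 m) (min y1 m)
            (|(y2 : ℚ) - (y1 : ℚ)|) (by omega) (by omega) hp,
          min_eq_left (by omega : y2 ≤ m), min_eq_left (by omega : y1 ≤ m),
          abs_sub_comm, abs_of_nonneg (by
            have h7 : (y2 : ℚ) ≤ (y1 : ℚ) := by exact_mod_cast hy2.2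
            linarith)]
        push_cast
        ring
      have hhigh : ∀ y2 ∈ Finset.Icc (y1 + 1) m, wtWW p m y1 y2 = (2 : ℚ) * (y2:ℚ) + (3 : ℚ) * (y2:ℚ)^2 + (-2/3 : ℚ) * (y1:ℚ) + (2 : ℚ) * (y1:ℚ) * (y2:ℚ) + (6 : ℚ) * (y1:ℚ) * (y2:ℚ)^2 + (-1 : ℚ) * (y1:ℚ)^2 + (-4 : ℚ) * (y1:ℚ)^2 * (y2:ℚ) + (2/3 : ℚ) * (y1:ℚ)^3 + (2/3 : ℚ) * (p:ℚ) + (4 : ℚ) * (p:ℚ) * (y2:ℚ) + (3 : ℚ) * (p:ℚ) * (y2:ℚ)^2 + (2 : ℚ) * (p:ℚ) * (y1:ℚ) * (y2:ℚ) + (-1 : ℚ) * (p:ℚ) * (y1:ℚ)^2 + (1 : ℚ) * (p:ℚ)^2 + (2 : ℚ) * (p:ℚ)^2 * (y2:ℚ) + (1/3 : ℚ) * (p:ℚ)^3 := by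
        intro y2 hy2
        simp only [Finset.mem_Icc] at hy2
        unfold wtWW wtRow
        rw [wtPairSum p (min y1 m) (min y2 m)
            (|(y1 : ℚ) - (y2 : ℚ)|) (by omega) (by omega) hp,
          min_eq_left (by omega : y1 ≤ m), min_eq_left (by omega : y2 ≤ m),
          abs_sub_comm, abs_of_nonneg (by
            have h7 : (y1 : ℚ) ≤ (y2 : ℚ) := by
              exact_mod_cast (by omega : y1 ≤ y2)
            linarith)]
        push_cast
        ring
      have elow : (∑ y2 ∈ Finset.Icc 0 y1, wtWW p m y1 y2) = (3/2 : ℚ) * (y1:ℚ) + (14/3 : ℚ) * (y1:ℚ)^2 + (5 : ℚ) * (y1:ℚ)^3 + (11/6 : ℚ) * (y1:ℚ)^4 + (2/3 : ℚ) * (p:ℚ) + (9/2 : ℚ) * (p:ℚ) * (y1:ℚ) + (15/2 : ℚ) * (p:ℚ) * (y1:ℚ)^2 + (11/3 : ℚ) * (p:ℚ) * (y1:ℚ)^3 + (1 : ℚ) * (p:ℚ)^2 + (3 : ℚ) * (p:ℚ)^2 * (y1:ℚ) + (2 : ℚ) * (p:ℚ)^2 * (y1:ℚ)^2 + (1/3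 : ℚ) * (p:ℚ)^3 + (1/3 : ℚ) * (p:ℚ)^3 * (y1:ℚ) := by
        refine (Finset.sum_congr rfl hlow).trans ?_
        rw [wtSumTele 0 y1 (by omega) (fun y2 : ℤ => (-2/3 : ℚ) * (y2:ℚ) + (-1 : ℚ) * (y2:ℚ)^2 + (2/3 : ℚ) * (y2:ℚ)^3 + (2 : ℚ) * (y1:ℚ) + (2 : ℚ) * (y1:ℚ) * (y2:ℚ) + (-4 : ℚ) * (y1:ℚ) * (y2:ℚ)^2 + (3 : ℚ) * (y1:ℚ)^2 + (6 : ℚ) * (y1:ℚ)^2 * (y2:ℚ) + (2/3 : ℚ) * (p:ℚ) + (-1 : ℚ) * (p:ℚ) * (y2:ℚ)^2 + (4 : ℚ) * (p:ℚ) * (y1:ℚ) + (2 : ℚ) * (p:ℚ) * (y1:ℚ) * (y2:ℚ) + (3 : ℚ) * (p:ℚ) * (y1:ℚ)^2 + (1 : ℚ) * (p:ℚ)^2 + (2 : ℚ) * (p:ℚ)^2 * (y1:ℚ) + (1/3 : ℚ) * (p:ℚ)^3) (fun t : ℚ => (-1/2 : ℚ) * t + (-2/3 : ℚ) * t^2 +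 (1/6 : ℚ) * t^4 + (7/3 : ℚ) * (y1:ℚ) * t + (-1 : ℚ) * (y1:ℚ) * t^2 + (-4/3 : ℚ) * (y1:ℚ) * t^3 + (6 : ℚ) * (y1:ℚ)^2 * t + (3 : ℚ) * (y1:ℚ)^2 * t^2 + (1/2 : ℚ) * (p:ℚ) * t + (-1/2 : ℚ) * (p:ℚ) * t^2 + (-1/3 : ℚ) * (p:ℚ) * t^3 + (5 : ℚ) * (p:ℚ) * (y1:ℚ) * t + (1 : ℚ) * (p:ℚ) * (y1:ℚ) * t^2 + (3 : ℚ) * (p:ℚ) * (y1:ℚ)^2 * t + (1 : ℚ) * (p:ℚ)^2 * t + (2 : ℚ) * (p:ℚ)^2 * (y1:ℚ) * t + (1/3 : ℚ) * (p:ℚ)^3 * t)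
            (fun t h1 h2 => by push_cast; ring)]
        push_cast
        ring
      have ehigh : (∑ y2 ∈ Finset.Icc (y1 + 1) m, wtWW p m y1 y2) = (-3/2 : ℚ) * (y1:ℚ) + (-23/6 : ℚ) * (y1:ℚ)^2 + (-2 : ℚ) * (y1:ℚ)^3 + (-2/3 : ℚ) * (y1:ℚ)^4 + (3/2 : ℚ) * (m:ℚ) + (4/3 : ℚ) * (m:ℚ) * (y1:ℚ) + (-3 : ℚ) * (m:ℚ) * (y1:ℚ)^2 + (2/3 : ℚ) * (m:ℚ) * (y1:ℚ)^3 + (5/2 : ℚ) * (m:ℚ)^2 + (4 : ℚ) * (m:ℚ)^2 * (y1:ℚ) + (-2 : ℚ) * (m:ℚ)^2 * (y1:ℚ)^2 + (1 : ℚ) * (m:ℚ)^3 + (2 : ℚ) * (m:ℚ)^3 * (y1:ℚ) + (-19/6 : ℚ) * (p:ℚ) * (y1:ℚ) + (-9/2 : ℚ) * (p:ℚ) * (y1:ℚ)^2 + (-1 : ℚ) * (p:ℚ) * (y1:ℚ)^3 + (19/6 : ℚ) * (p:ℚ) * (m:ℚ) + (1 : ℚ) * (p:ℚ) * (m:ℚ)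 * (y1:ℚ) + (-1 : ℚ) * (p:ℚ) * (m:ℚ) * (y1:ℚ)^2 + (7/2 : ℚ) * (p:ℚ) * (m:ℚ)^2 + (1 : ℚ) * (p:ℚ) * (m:ℚ)^2 * (y1:ℚ) + (1 : ℚ) * (p:ℚ) * (m:ℚ)^3 + (-2 : ℚ) * (p:ℚ)^2 * (y1:ℚ) + (-1 : ℚ) * (p:ℚ)^2 * (y1:ℚ)^2 + (2 : ℚ) * (p:ℚ)^2 * (m:ℚ) + (1 : ℚ) * (p:ℚ)^2 * (m:ℚ)^2 + (-1/3 : ℚ) * (p:ℚ)^3 * (y1:ℚ) + (1/3 : ℚ) * (p:ℚ)^3 * (m:ℚ) := by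
        refine (Finset.sum_congr rfl hhigh).trans ?_
        rw [wtSumTele (y1 + 1) m (by omega) (fun y2 : ℤ => (2 : ℚ) * (y2:ℚ) + (3 : ℚ) * (y2:ℚ)^2 + (-2/3 : ℚ) * (y1:ℚ) + (2 : ℚ) * (y1:ℚ) * (y2:ℚ) + (6 : ℚ) * (y1:ℚ) * (y2:ℚ)^2 + (-1 : ℚ) * (y1:ℚ)^2 + (-4 : ℚ) * (y1:ℚ)^2 * (y2:ℚ) + (2/3 : ℚ) * (y1:ℚ)^3 + (2/3 : ℚ) * (p:ℚ) + (4 : ℚ) * (p:ℚ) * (y2:ℚ) + (3 : ℚ) * (p:ℚ) * (y2:ℚ)^2 + (2 : ℚ) * (p:ℚ) * (y1:ℚ) * (y2:ℚ) + (-1 : ℚ) * (p:ℚ) * (y1:ℚ)^2 + (1 : ℚ) * (p:ℚ)^2 + (2 : ℚ) * (p:ℚ)^2 * (y2:ℚ) + (1/3 : ℚ) * (p:ℚ)^3) (fun t : ℚ => (3/2 : ℚ) * t + (5/2 : ℚ) * t^2 + (1 : ℚ) * t^3 + (4/3 : ℚ) * (y1:ℚ) * t + (4 : ℚ) * (y1:ℚ)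 * t^2 + (2 : ℚ) * (y1:ℚ) * t^3 + (-3 : ℚ) * (y1:ℚ)^2 * t + (-2 : ℚ) * (y1:ℚ)^2 * t^2 + (2/3 : ℚ) * (y1:ℚ)^3 * t + (19/6 : ℚ) * (p:ℚ) * t + (7/2 : ℚ) * (p:ℚ) * t^2 + (1 : ℚ) * (p:ℚ) * t^3 + (1 : ℚ) * (p:ℚ) * (y1:ℚ) * t + (1 : ℚ) * (p:ℚ) * (y1:ℚ) * t^2 + (-1 : ℚ) * (p:ℚ) * (y1:ℚ)^2 * t + (2 : ℚ) * (p:ℚ)^2 * t + (1 : ℚ) * (p:ℚ)^2 * t^2 + (1/3 : ℚ) * (p:ℚ)^3 * t)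
            (fun t h1 h2 => by push_cast; ring)]
        push_cast
        ring
      rw [hsplit, Finset.sum_union hdisj, elow, ehigh]
      ring
    refine (Finset.sum_congr rfl hinner).trans ?_
    rw [wtSumTele 0 m (by omega) (fun y1 : ℤ => (5/6 : ℚ) * (y1:ℚ)^2 + (3 : ℚ) * (y1:ℚ)^3 + (7/6 : ℚ) * (y1:ℚ)^4 + (3/2 : ℚ) * (m:ℚ) + (4/3 : ℚ) * (m:ℚ) * (y1:ℚ) + (-3 : ℚ) * (m:ℚ) * (y1:ℚ)^2 + (2/3 : ℚ) * (m:ℚ) * (y1:ℚ)^3 + (5/2 : ℚ) * (m:ℚ)^2 + (4 : ℚ) * (m:ℚ)^2 * (y1:ℚ) + (-2 : ℚ) * (m:ℚ)^2 * (y1:ℚ)^2 + (1 : ℚ) * (m:ℚ)^3 + (2 : ℚ) * (m:ℚ)^3 * (y1:ℚ) + (2/3 : ℚ) * (p:ℚ) + (4/3 : ℚ) * (p:ℚ) * (y1:ℚ) + (3 : ℚ) * (p:ℚ) * (y1:ℚ)^2 + (8/3 : ℚ) * (p:ℚ) * (y1:ℚ)^3 + (19/6 : ℚ) * (p:ℚ)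 * (m:ℚ) + (1 : ℚ) * (p:ℚ) * (m:ℚ) * (y1:ℚ) + (-1 : ℚ) * (p:ℚ) * (m:ℚ) * (y1:ℚ)^2 + (7/2 : ℚ) * (p:ℚ) * (m:ℚ)^2 + (1 : ℚ) * (p:ℚ) * (m:ℚ)^2 * (y1:ℚ) + (1 : ℚ) * (p:ℚ) * (m:ℚ)^3 + (1 : ℚ) * (p:ℚ)^2 + (1 : ℚ) * (p:ℚ)^2 * (y1:ℚ) + (1 : ℚ) * (p:ℚ)^2 * (y1:ℚ)^2 + (2 : ℚ) * (p:ℚ)^2 * (m:ℚ) + (1 : ℚ) * (p:ℚ)^2 * (m:ℚ)^2 + (1/3 : ℚ) * (p:ℚ)^3 + (1/3 : ℚ) * (p:ℚ)^3 * (m:ℚ)) (fun t : ℚ => (1/10 : ℚ) * t + (7/6 : ℚ) * t^2 + (13/6 : ℚ) * t^3 + (4/3 : ℚ) * t^4 + (7/30 : ℚ) * t^5 + (5/3 : ℚ) * (m:ℚ) * t + (-2/3 : ℚ) * (m:ℚ) * t^2 + (-2/3 : ℚ) * (m:ℚ) * t^3 + (1/6 : ℚ) * (m:ℚ) * t^4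 + (25/6 : ℚ) * (m:ℚ)^2 * t + (1 : ℚ) * (m:ℚ)^2 * t^2 + (-2/3 : ℚ) * (m:ℚ)^2 * t^3 + (2 : ℚ) * (m:ℚ)^3 * t + (1 : ℚ) * (m:ℚ)^3 * t^2 + (11/6 : ℚ) * (p:ℚ) * t + (17/6 : ℚ) * (p:ℚ) * t^2 + (7/3 : ℚ) * (p:ℚ) * t^3 + (2/3 : ℚ) * (p:ℚ) * t^4 + (7/2 : ℚ) * (p:ℚ) * (m:ℚ) * t + (-1/3 : ℚ) * (p:ℚ) * (m:ℚ) * t^3 + (4 : ℚ) * (p:ℚ) * (m:ℚ)^2 * t + (1/2 : ℚ) * (p:ℚ) * (m:ℚ)^2 * t^2 + (1 : ℚ) * (p:ℚ) * (m:ℚ)^3 * t + (5/3 : ℚ) * (p:ℚ)^2 * t + (1 : ℚ) * (p:ℚ)^2 * t^2 + (1/3 : ℚ) * (p:ℚ)^2 * t^3 + (2 : ℚ) * (p:ℚ)^2 * (m:ℚ) * t + (1 : ℚ) * (p:ℚ)^2 * (m:ℚ)^2 * t + (1/3 : ℚ) * (p:ℚ)^3 * t + (1/3 : ℚ) * (p:ℚ)^3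 * (m:ℚ) * t)
        (fun t h1 h2 => by push_cast; ring)]
    push_cast
    ring
  rw [wtMainSum p m hp hm0, hins, Finset.sum_insert hnot, Finset.sum_insert hnot]
  have hsplit2 : (∑ y1 ∈ Finset.Icc 0 m, ∑ y2 ∈ insert (m + 1) (Finset.Icc 0 m),
      wtWW p m y1 y2) =
      ∑ y1 ∈ Finset.Icc 0 m, (wtWW p m y1 (m + 1) + ∑ y2 ∈ Finset.Icc 0 m, wtWW p m y1 y2) :=
    Finset.sum_congr rfl fun y1 _ => Finset.sum_insert hnot
  rw [hsplit2, Finset.sum_add_distrib, hT1, hT2, hT3, hT4]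
  push_cast
  ring
end
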